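/- arXiv:2605.06194 — 8 statements merged into one kernel-verified Lean document; each statement's English description precedes it below -/
import Mathlib

section
/- Every candidate-interval instance is integralizable: if the candidate types R_1,…,R_t present in the instance can be ordered so that for each voter i the set of types containing i is a contiguous interval of the order, then every integer utility vector that is fractional-committee-feasible is also integral-committee-feasible. -/
/-- Candidate types: non-empty subsets of the voter set `Fin n`. -/
abbrev Typ (n : ℕ) := {S : Finset (Fin n) // S.Nonempty}

/-- Utility of voter `i` under an integral committee `x`. -/
def intUtil {n : ℕ} (x : Typ n → ℕ) (i : Fin n) : ℤ :=
  ∑ R : Typ n, if i ∈ R.1 then (x R : ℤ) else 0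

/-- Utility of voter `i` under a fractional committee `x`. -/
def fracUtil {n : ℕ} (x : Typ n → ℝ) (i : Fin n) : ℝ :=
  ∑ R : Typ n, if i ∈ R.1 then x R else 0

/-- `x` is an integral committee for the instance `(c, k)`. -/
def IsIntCommittee {n : ℕ} (c : Typ n → ℕ) (k : ℕ) (x : Typ n → ℕ) : Prop :=
  (∀ R, x R ≤ c R) ∧ (∑ R : Typ n, x R) ≤ k

/-- `x` is a fractional committee for the instance `(c, k)`. -/
def IsFracCommittee {n : ℕ} (c : Typ n → ℕ) (k : ℕ) (x : Typ n → ℝ) : Prop :=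
  (∀ R, 0 ≤ x R) ∧ (∀ R, x R ≤ (c R : ℝ)) ∧ (∑ R : Typ n, x R) ≤ (k : ℝ)

/-- `u` is integral-committee-feasible in `(c, k)`. -/
def IntFeasible {n : ℕ} (c : Typ n → ℕ) (k : ℕ) (u : Fin n → ℤ) : Prop :=
  ∃ x : Typ n → ℕ, IsIntCommittee c k x ∧ ∀ i, u i ≤ intUtil x i

/-- `u` is fractional-committee-feasible in `(c, k)`. -/
def FracFeasible {n : ℕ} (c : Typ n → ℕ) (k : ℕ) (u : Fin n → ℤ) : Prop :=
  ∃ x : Typ n → ℝ, IsFracCommittee c k x ∧ ∀ i, (u i : ℝ) ≤ fracUtil x i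

/-- `(c, k)` is integralizable. -/
def Integralizable {n : ℕ} (c : Typ n → ℕ) (k : ℕ) : Prop :=
  ∀ u : Fin n → ℤ, FracFeasible c k u → IntFeasible c k u

lemma floor_add_le (a b : ℝ) : ⌊a + b⌋ ≤ ⌊a⌋ + ⌈b⌉ := by
  have h1 := Int.lt_floor_add_one a
  have h2 := Int.le_ceil b
  have h : a + b < ((⌊a⌋ + ⌈b⌉ + 1 : ℤ) : ℝ) := by push_cast; linarith
  exact Int.lt_add_one_iff.mp (Int.floor_lt.mpr h)

lemma floor_sub_le' (a b : ℝ) : ⌊a - b⌋ ≤ ⌊a⌋ - ⌊b⌋ := by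
  have h : ⌊a - b⌋ + ⌊b⌋ ≤ ⌊a⌋ := by
    apply Int.le_floor.mpr
    push_cast
    have := Int.floor_le (a - b)
    have := Int.floor_le b
    linarith
  omega

/-- Every candidate-interval instance is integralizable: if the present candidate
types can be ordered so that for each voter the set of present types containing
that voter forms a contiguous interval of the order, then every integer utility
vector that is fractional-committee-feasible is integral-committee-feasible. -/
theorem stmt1 (n : ℕ) (c : Typ n → ℕ) (k : ℕ)
    (hCI : ∃ σ : Typ n → ℕ, Set.InjOn σ {R | 0 < c R} ∧
      ∀ i : Fin n, ∀ R₁ R₂ R₃ : Typ n, 0 < c R₁ → 0 < c R₂ → 0 < c R₃ →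
        σ R₁ ≤ σ R₂ → σ R₂ ≤ σ R₃ → i ∈ R₁.1 → i ∈ R₃.1 → i ∈ R₂.1) :
    Integralizable c k := by
  classical
  obtain ⟨σ0, hinj0, hint0⟩ := hCI
  intro u hu
  obtain ⟨x, ⟨hx0, hxc, hxk⟩, hxu⟩ := hu
  -- shift σ so that all values are positive
  set σ : Typ n → ℕ := fun R => σ0 R + 1 with hσdef
  have hinj : ∀ R₁ R₂ : Typ n, 0 < c R₁ → 0 < c R₂ → σ R₁ = σ R₂ → R₁ = R₂ := by
    intro R₁ R₂ h1 h2 h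
    exact hinj0 h1 h2 (by simpa [hσdef] using h)
  have hint : ∀ i : Fin n, ∀ R₁ R₂ R₃ : Typ n, 0 < c R₁ → 0 < c R₂ → 0 < c R₃ →
      σ R₁ ≤ σ R₂ → σ R₂ ≤ σ R₃ → i ∈ R₁.1 → i ∈ R₃.1 → i ∈ R₂.1 := by
    intro i R₁ R₂ R₃ h1 h2 h3 h12 h23 hi1 hi3
    exact hint0 i R₁ R₂ R₃ h1 h2 h3 (by simpa [hσdef] using h12)
      (by simpa [hσdef] using h23) hi1 hi3
  have hσpos : ∀ R, 1 ≤ σ R := fun R => Nat.le_add_left 1 _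
  have hxz : ∀ R, c R = 0 → x R = 0 := by
    intro R h
    have := hxc R
    rw [h] at this
    exact le_antisymm (by simpa using this) (hx0 R)
  -- cumulative sums
  set S : ℕ → ℝ :=
    fun m => ∑ R ∈ Finset.univ.filter (fun R : Typ n => 0 < c R ∧ σ R ≤ m), x R with hSdef
  have hS0 : S 0 = 0 := by
    have he : Finset.univ.filter (fun R : Typ n => 0 < c R ∧ σ R ≤ 0) = ∅ := by
      ext R
      simp only [Finset.mem_filter, Finset.mem_univ, true_and, Finset.notMem_empty,
        iff_false, not_and]
      intro _
      have := hσpos R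
      omega
    simp only [hSdef]
    rw [he, Finset.sum_empty]
  have hSmono : ∀ a b : ℕ, a ≤ b → S a ≤ S b := by
    intro a b hab
    apply Finset.sum_le_sum_of_subset_of_nonneg
    · intro R hR
      simp only [Finset.mem_filter, Finset.mem_univ, true_and] at hR ⊢
      exact ⟨hR.1, hR.2.trans hab⟩
    · intro R _ _; exact hx0 R
  -- splitting the cumulative sum at the position of a present type
  have hSx : ∀ R : Typ n, 0 < c R → S (σ R) = S (σ R - 1) + x R := by
    intro R hR
    have hset : Finset.univ.filter (fun R' : Typ n => 0 < c R' ∧ σ R' ≤ σ R)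
        = insert R (Finset.univ.filter (fun R' : Typ n => 0 < c R' ∧ σ R' ≤ σ R - 1)) := by
      ext R'
      simp only [Finset.mem_filter, Finset.mem_univ, true_and, Finset.mem_insert]
      constructor
      · rintro ⟨hc', hle⟩
        rcases eq_or_lt_of_le hle with h | h
        · exact Or.inl (hinj R' R hc' hR h)
        · exact Or.inr ⟨hc', by omega⟩
      · rintro (rfl | ⟨hc', hle⟩)
        · exact ⟨hR, le_refl _⟩
        · exact ⟨hc', by omega⟩
    have hnot : R ∉ Finset.univ.filter (fun R' : Typ n => 0 < c R' ∧ σ R' ≤ σ R - 1) := by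
      simp only [Finset.mem_filter, Finset.mem_univ, true_and, not_and]
      intro _
      have := hσpos R
      omega
    rw [hSdef]
    simp only
    rw [hset, Finset.sum_insert hnot]
    ring
  have hSnone : ∀ m : ℕ, (∀ R : Typ n, 0 < c R → σ R ≠ m + 1) → S (m + 1) = S m := by
    intro m hm
    have hset : Finset.univ.filter (fun R' : Typ n => 0 < c R' ∧ σ R' ≤ m + 1)
        = Finset.univ.filter (fun R' : Typ n => 0 < c R' ∧ σ R' ≤ m) := by
      ext R'
      simp only [Finset.mem_filter, Finset.mem_univ, true_and]
      constructor
      · rintro ⟨hc', hle⟩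
        exact ⟨hc', by have := hm R' hc'; omega⟩
      · rintro ⟨hc', hle⟩
        exact ⟨hc', by omega⟩
    simp only [hSdef]
    rw [hset]
  set F : ℕ → ℤ := fun m => ⌊S m⌋ with hFdef
  have hFmono : ∀ a b : ℕ, a ≤ b → F a ≤ F b := fun a b hab =>
    Int.floor_le_floor (hSmono a b hab)
  -- the rounded committee
  set y : Typ n → ℕ := fun R => if 0 < c R then (F (σ R) - F (σ R - 1)).toNat else 0
    with hydef
  have hycast : ∀ R : Typ n, 0 < c R → (y R : ℤ) = F (σ R) - F (σ R - 1) := by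
    intro R hR
    rw [hydef]
    simp only [hR, if_pos]
    exact Int.toNat_of_nonneg (by have := hFmono (σ R - 1) (σ R) (by omega); omega)
  have hyzero : ∀ R : Typ n, ¬ 0 < c R → y R = 0 := by
    intro R hR; rw [hydef]; simp [hR]
  -- capacity constraint
  have hyc : ∀ R, y R ≤ c R := by
    intro R
    by_cases hR : 0 < c R
    · have h1 : (y R : ℤ) = F (σ R) - F (σ R - 1) := hycast R hR
      have h2 : F (σ R) = ⌊S (σ R - 1) + x R⌋ := by rw [hFdef]; simp only; rw [hSx R hR]
      have h3 : ⌊S (σ R - 1) + x R⌋ ≤ ⌊S (σ R - 1)⌋ + ⌈x R⌉ := floor_add_le _ _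
      have h4 : ⌈x R⌉ ≤ (c R : ℤ) := Int.ceil_le.mpr (by exact_mod_cast hxc R)
      have : (y R : ℤ) ≤ (c R : ℤ) := by
        rw [h1, h2]
        have : F (σ R - 1) = ⌊S (σ R - 1)⌋ := rfl
        omega
      exact_mod_cast this
    · rw [hyzero R hR]; omega
  -- partial sums of y telescope to F
  have hPS : ∀ b : ℕ,
      ∑ R ∈ Finset.univ.filter (fun R : Typ n => 0 < c R ∧ σ R ≤ b), (y R : ℤ) = F b := by
    intro b
    induction b with
    | zero =>
      have he : Finset.univ.filter (fun R : Typ n => 0 < c R ∧ σ R ≤ 0) = ∅ := by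
        ext R
        simp only [Finset.mem_filter, Finset.mem_univ, true_and, Finset.notMem_empty,
          iff_false, not_and]
        intro _
        have := hσpos R
        omega
      rw [he, Finset.sum_empty, hFdef]
      simp only
      rw [hS0]
      simp
    | succ m ih =>
      by_cases hex : ∃ R : Typ n, 0 < c R ∧ σ R = m + 1
      · obtain ⟨R0, hR0c, hR0σ⟩ := hex
        have hset : Finset.univ.filter (fun R : Typ n => 0 < c R ∧ σ R ≤ m + 1)
            = insert R0 (Finset.univ.filter (fun R : Typ n => 0 < c R ∧ σ R ≤ m)) := by
          ext R'
          simp only [Finset.mem_filter, Finset.mem_univ, true_and, Finset.mem_insert]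
          constructor
          · rintro ⟨hc', hle⟩
            rcases Nat.lt_or_ge (σ R') (m + 1) with h | h
            · exact Or.inr ⟨hc', by omega⟩
            · exact Or.inl (hinj R' R0 hc' hR0c (by omega))
          · rintro (rfl | ⟨hc', hle⟩)
            · exact ⟨hR0c, by omega⟩
            · exact ⟨hc', by omega⟩
        have hnot : R0 ∉ Finset.univ.filter (fun R : Typ n => 0 < c R ∧ σ R ≤ m) := by
          simp only [Finset.mem_filter, Finset.mem_univ, true_and, not_and]
          intro _
          omega
        rw [hset, Finset.sum_insert hnot, ih, hycast R0 hR0c, hR0σ]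
        simp only [Nat.add_sub_cancel]
        ring
      · push_neg at hex
        have hset : Finset.univ.filter (fun R : Typ n => 0 < c R ∧ σ R ≤ m + 1)
            = Finset.univ.filter (fun R : Typ n => 0 < c R ∧ σ R ≤ m) := by
          ext R'
          simp only [Finset.mem_filter, Finset.mem_univ, true_and]
          constructor
          · rintro ⟨hc', hle⟩
            exact ⟨hc', by have := hex R' hc'; omega⟩
          · rintro ⟨hc', hle⟩
            exact ⟨hc', by omega⟩
        have hF : F (m + 1) = F m := by
          rw [hFdef]
          simp only
          rw [hSnone m (fun R hR => hex R hR)]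
        rw [hset, ih, hF]
  -- cardinality constraint
  have hyk : ∑ R : Typ n, y R ≤ k := by
    set M : ℕ := Finset.univ.sup σ with hMdef
    have hσM : ∀ R : Typ n, σ R ≤ M := fun R => Finset.le_sup (Finset.mem_univ R)
    have h1 : (∑ R : Typ n, (y R : ℤ)) =
        ∑ R ∈ Finset.univ.filter (fun R : Typ n => 0 < c R ∧ σ R ≤ M), (y R : ℤ) := by
      symm
      apply Finset.sum_subset (Finset.filter_subset _ _)
      intro R _ hR
      simp only [Finset.mem_filter, Finset.mem_univ, true_and, not_and] at hR
      by_cases hc' : 0 < c R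
      · exact absurd (hσM R) (hR hc')
      · rw [hyzero R hc']; simp
    have h2 : F M ≤ (k : ℤ) := by
      have hSk : S M ≤ (k : ℝ) := by
        refine le_trans ?_ hxk
        apply Finset.sum_le_sum_of_subset_of_nonneg (Finset.filter_subset _ _)
        intro R _ _
        exact hx0 R
      calc F M = ⌊S M⌋ := rfl
        _ ≤ ⌊(k : ℝ)⌋ := Int.floor_le_floor hSk
        _ = (k : ℤ) := Int.floor_natCast k
    have : (∑ R : Typ n, (y R : ℤ)) ≤ (k : ℤ) := by rw [h1, hPS M]; exact h2
    exact_mod_cast (by push_cast at this ⊢; exact this : ((∑ R : Typ n, y R : ℕ) : ℤ) ≤ (k : ℤ))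
  -- utility constraints
  have hyu : ∀ i, u i ≤ intUtil y i := by
    intro i
    set A : Finset (Typ n) := Finset.univ.filter (fun R : Typ n => 0 < c R ∧ i ∈ R.1) with hAdef
    have hIntA : intUtil y i = ∑ R ∈ A, (y R : ℤ) := by
      rw [intUtil, ← Finset.sum_filter]
      symm
      apply Finset.sum_subset
      · intro R hR
        simp only [hAdef, Finset.mem_filter, Finset.mem_univ, true_and] at hR ⊢
        exact hR.2
      · intro R hR hR'
        simp only [hAdef, Finset.mem_filter, Finset.mem_univ, true_and, not_and] at hR hR'
        by_cases hc' : 0 < c R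
        · exact absurd hR (hR' hc')
        · rw [hyzero R hc']; simp
    have hFracA : fracUtil x i = ∑ R ∈ A, x R := by
      rw [fracUtil, ← Finset.sum_filter]
      symm
      apply Finset.sum_subset
      · intro R hR
        simp only [hAdef, Finset.mem_filter, Finset.mem_univ, true_and] at hR ⊢
        exact hR.2
      · intro R hR hR'
        simp only [hAdef, Finset.mem_filter, Finset.mem_univ, true_and, not_and] at hR hR'
        by_cases hc' : 0 < c R
        · exact absurd hR (hR' hc')
        · rw [hxz R (by omega)]
    by_cases hA : A.Nonempty
    · obtain ⟨Rmin, hRminA, hRmin⟩ := Finset.exists_min_image A σ hA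
      obtain ⟨Rmax, hRmaxA, hRmax⟩ := Finset.exists_max_image A σ hA
      set a : ℕ := σ Rmin - 1 with hadef
      set b : ℕ := σ Rmax with hbdef
      have hRminc : 0 < c Rmin ∧ i ∈ Rmin.1 := by
        simpa [hAdef] using hRminA
      have hRmaxc : 0 < c Rmax ∧ i ∈ Rmax.1 := by
        simpa [hAdef] using hRmaxA
      have hab : a ≤ b := by
        have := hRmin Rmax hRmaxA
        omega
      -- A is exactly the types in the interval (a, b]
      have hAset : A = Finset.univ.filter (fun R : Typ n => 0 < c R ∧ a < σ R ∧ σ R ≤ b) := by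
        ext R
        simp only [hAdef, Finset.mem_filter, Finset.mem_univ, true_and]
        constructor
        · rintro ⟨hc', hi'⟩
          have h1 := hRmin R (by simp [hAdef, hc', hi'])
          have h2 := hRmax R (by simp [hAdef, hc', hi'])
          have := hσpos Rmin
          exact ⟨hc', by omega, h2⟩
        · rintro ⟨hc', h1, h2⟩
          have hσ1 : σ Rmin ≤ σ R := by have := hσpos Rmin; omega
          exact ⟨hc', hint i Rmin R Rmax hRminc.1 hc' hRmaxc.1 hσ1 h2 hRminc.2 hRmaxc.2⟩
      -- split of filter at level b into level a plus A
      have hsplit : Finset.univ.filter (fun R : Typ n => 0 < c R ∧ σ R ≤ b)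
          = (Finset.univ.filter (fun R : Typ n => 0 < c R ∧ σ R ≤ a)) ∪ A := by
        rw [hAset]
        ext R
        simp only [Finset.mem_filter, Finset.mem_univ, true_and, Finset.mem_union]
        constructor
        · rintro ⟨hc', hle⟩
          rcases Nat.lt_or_ge a (σ R) with h | h
          · exact Or.inr ⟨hc', h, hle⟩
          · exact Or.inl ⟨hc', h⟩
        · rintro (⟨hc', hle⟩ | ⟨hc', h1, h2⟩)
          · exact ⟨hc', by omega⟩
          · exact ⟨hc', h2⟩
      have hdisj : Disjoint (Finset.univ.filter (fun R : Typ n => 0 < c R ∧ σ R ≤ a)) A := by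
        rw [hAset, Finset.disjoint_left]
        intro R hR hR'
        simp only [Finset.mem_filter, Finset.mem_univ, true_and] at hR hR'
        omega
      -- sum of y over A
      have hsumy : ∑ R ∈ A, (y R : ℤ) = F b - F a := by
        have := hPS b
        rw [hsplit, Finset.sum_union hdisj, hPS a] at this
        omega
      -- sum of x over A
      have hsumx : ∑ R ∈ A, x R = S b - S a := by
        have : S b = S a + ∑ R ∈ A, x R := by
          rw [hSdef]
          simp only
          rw [hsplit, Finset.sum_union hdisj]
        rw [this]; ring
      have hu_le : (u i : ℝ) ≤ S b - S a := by
        rw [← hsumx, ← hFracA]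
        exact hxu i
      have hfl : u i ≤ ⌊S b - S a⌋ := Int.le_floor.mpr hu_le
      have := floor_sub_le' (S b) (S a)
      rw [hIntA, hsumy]
      have hFa : F a = ⌊S a⌋ := rfl
      have hFb : F b = ⌊S b⌋ := rfl
      omega
    · -- empty case: u i ≤ 0 ≤ intUtil y i
      have hA0 : A = ∅ := Finset.not_nonempty_iff_eq_empty.mp hA
      have h1 : (u i : ℝ) ≤ 0 := by
        have := hxu i
        rw [hFracA, hA0, Finset.sum_empty] at this
        exact this
      have h2 : u i ≤ 0 := by exact_mod_cast h1
      rw [hIntA, hA0, Finset.sum_empty]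
      exact h2
  exact ⟨y, ⟨hyc, hyk⟩, hyu⟩
end

section
/- If an instance (c,k) is integralizable, then for any voter budgets b ∈ Q_{≥0}^n with Σ_i b_i = k there exists an integral committee in the core of (c,k,b). -/
/-- Integral committee affordable for coalition `S` given budgets `b`. -/
def IsIntAffordable {n : ℕ} (c : Typ n → ℕ) (b : Fin n → ℚ) (S : Finset (Fin n))
    (x : Typ n → ℕ) : Prop :=
  (∀ R, x R ≤ c R) ∧ (∑ R : Typ n, (x R : ℚ)) ≤ ∑ i ∈ S, b i

/-- Fractional committee affordable for coalition `S` given budgets `b`. -/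
def IsFracAffordable {n : ℕ} (c : Typ n → ℕ) (b : Fin n → ℚ) (S : Finset (Fin n))
    (x : Typ n → ℝ) : Prop :=
  (∀ R, 0 ≤ x R) ∧ (∀ R, x R ≤ (c R : ℝ)) ∧
    (∑ R : Typ n, x R) ≤ ((∑ i ∈ S, b i : ℚ) : ℝ)

/-- `x` is an integral committee in the core of `(c, k, b)`. -/
def InCore {n : ℕ} (c : Typ n → ℕ) (k : ℕ) (b : Fin n → ℚ) (x : Typ n → ℕ) : Prop :=
  IsIntCommittee c k x ∧
  ¬ ∃ (S : Finset (Fin n)) (y : Typ n → ℕ), S.Nonempty ∧ IsIntAffordable c b S y ∧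
      ∀ i ∈ S, intUtil x i < intUtil y i

/-- The fractional core of `(c, k, b)` is non-empty. -/
def FracCoreNonempty {n : ℕ} (c : Typ n → ℕ) (k : ℕ) (b : Fin n → ℚ) : Prop :=
  ∃ x : Typ n → ℝ, IsFracCommittee c k x ∧
    ¬ ∃ (S : Finset (Fin n)) (y : Typ n → ℝ), S.Nonempty ∧ IsFracAffordable c b S y ∧
        ∀ i ∈ S, fracUtil x i < fracUtil y i

/-- If an instance `(c, k)` is integralizable, then for any non-negative rational
voter budgets `b` summing to `k`, there exists an integral committee in the core
of `(c, k, b)` (assuming, as is known, that the fractional core is non-empty). -/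
theorem stmt2 (n : ℕ) (c : Typ n → ℕ) (k : ℕ) (b : Fin n → ℚ)
    (hb : ∀ i, 0 ≤ b i) (hsum : (∑ i, b i) = (k : ℚ))
    (hint : Integralizable c k)
    (hfrac : FracCoreNonempty c k b) :
    ∃ x : Typ n → ℕ, InCore c k b x := by
  obtain ⟨z, hz, hzcore⟩ := hfrac
  set u : Fin n → ℤ := fun i => ⌊fracUtil z i⌋ with hu
  obtain ⟨x, hx, hxu⟩ := hint u ⟨z, hz, fun i => Int.floor_le _⟩
  refine ⟨x, hx, ?_⟩
  rintro ⟨S, y, hS, ⟨hyc, hyb⟩, hblock⟩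
  apply hzcore
  refine ⟨S, fun R => (y R : ℝ), hS, ⟨fun R => by positivity,
    fun R => by simpa using (Nat.cast_le (α := ℝ)).mpr (hyc R), ?_⟩, ?_⟩
  · push_cast
    exact_mod_cast hyb
  · intro i hi
    have h1 : u i ≤ intUtil x i := hxu i
    have h2 : intUtil x i < intUtil y i := hblock i hi
    have h3 : fracUtil z i < (u i : ℝ) + 1 := Int.lt_floor_add_one _
    have h4 : fracUtil (fun R => (y R : ℝ)) i = (intUtil y i : ℝ) := by
      simp only [fracUtil, intUtil]
      push_cast
      exact Finset.sum_congr rfl fun R _ => by split <;> simp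
    rw [h4]
    have : (u i : ℝ) + 1 ≤ (intUtil y i : ℝ) := by
      have : u i + 1 ≤ intUtil y i := by omega
      exact_mod_cast this
    linarith
end

section
/- There exists an instance with 6 voters that is not integralizable: for N = {1,…,6}, k = 3, types R_c = {{1,2},{1,3},{2,3},{4,5},{4,6},{5,6}} each with supply 1, the utility vector u = (1,1,1,1,1,1) is fractional-committee-feasible (witnessed by x_R = 1/2 for all six types) but not integral-committee-feasible. -/
/-- The "two triangles" supply vector on six voters. -/
def cTwoTriangles : Typ 6 → ℕ := fun R =>
  if R.1 = ({0, 1} : Finset (Fin 6)) ∨ R.1 = ({0, 2} : Finset (Fin 6)) ∨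
     R.1 = ({1, 2} : Finset (Fin 6)) ∨ R.1 = ({3, 4} : Finset (Fin 6)) ∨
     R.1 = ({3, 5} : Finset (Fin 6)) ∨ R.1 = ({4, 5} : Finset (Fin 6))
  then 1 else 0

/-- The pair type `{a, b}`. -/
def P (a b : Fin 6) : Typ 6 := ⟨{a, b}, ⟨a, by simp⟩⟩

lemma util_eq (x : Typ 6 → ℕ) (hc : ∀ R, x R ≤ cTwoTriangles R) (i : Fin 6) :
    intUtil x i =
      ∑ R ∈ Finset.univ.filter (fun R : Typ 6 => i ∈ R.1 ∧ cTwoTriangles R ≠ 0),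
        (x R : ℤ) := by
  rw [Finset.sum_filter, intUtil]
  refine Finset.sum_congr rfl fun R _ => ?_
  by_cases h1 : i ∈ R.1
  · by_cases h2 : cTwoTriangles R = 0
    · have hx := hc R
      rw [h2, Nat.le_zero] at hx
      simp [h1, h2, hx]
    · simp [h1, h2]
  · simp [h1]

/-- The two-triangles instance with `n = 6`, `k = 3` is not integralizable:
`u = (1,1,1,1,1,1)` is fractional-committee-feasible but not
integral-committee-feasible. -/
theorem stmt3 :
    FracFeasible cTwoTriangles 3 (fun _ => 1) ∧
    ¬ IntFeasible cTwoTriangles 3 (fun _ => 1) := by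
  constructor
  · refine ⟨fun R => (cTwoTriangles R : ℝ) / 2, ⟨fun R => by positivity,
      fun R => half_le_self (by positivity), ?_⟩, ?_⟩
    · rw [← Finset.sum_div, ← Nat.cast_sum,
        show (∑ R : Typ 6, cTwoTriangles R) = 6 from by decide]
      norm_num
    · have hcount : ∀ i : Fin 6,
          (∑ R : Typ 6, if i ∈ R.1 then cTwoTriangles R else 0) = 2 := by decide
      intro i
      have key : ∀ R : Typ 6, (if i ∈ R.1 then (cTwoTriangles R : ℝ) / 2 else 0)
          = ((if i ∈ R.1 then cTwoTriangles R else 0 : ℕ) : ℝ) / 2 := by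
        intro R; split <;> simp
      rw [fracUtil, Finset.sum_congr rfl (fun R _ => key R), ← Finset.sum_div,
        ← Nat.cast_sum, hcount i]
      norm_num
  · rintro ⟨x, ⟨hc, hk⟩, hu⟩
    have f0 : Finset.univ.filter (fun R : Typ 6 => (0 : Fin 6) ∈ R.1 ∧ cTwoTriangles R ≠ 0)
        = {P 0 1, P 0 2} := by decide
    have f1 : Finset.univ.filter (fun R : Typ 6 => (1 : Fin 6) ∈ R.1 ∧ cTwoTriangles R ≠ 0)
        = {P 0 1, P 1 2} := by decide
    have f2 : Finset.univ.filter (fun R : Typ 6 => (2 : Fin 6) ∈ R.1 ∧ cTwoTriangles R ≠ 0)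
        = {P 0 2, P 1 2} := by decide
    have f3 : Finset.univ.filter (fun R : Typ 6 => (3 : Fin 6) ∈ R.1 ∧ cTwoTriangles R ≠ 0)
        = {P 3 4, P 3 5} := by decide
    have f4 : Finset.univ.filter (fun R : Typ 6 => (4 : Fin 6) ∈ R.1 ∧ cTwoTriangles R ≠ 0)
        = {P 3 4, P 4 5} := by decide
    have f5 : Finset.univ.filter (fun R : Typ 6 => (5 : Fin 6) ∈ R.1 ∧ cTwoTriangles R ≠ 0)
        = {P 3 5, P 4 5} := by decide
    have h0 := hu 0; have h1 := hu 1; have h2 := hu 2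
    have h3 := hu 3; have h4 := hu 4; have h5 := hu 5
    rw [util_eq x hc, f0, Finset.sum_pair (by decide)] at h0
    rw [util_eq x hc, f1, Finset.sum_pair (by decide)] at h1
    rw [util_eq x hc, f2, Finset.sum_pair (by decide)] at h2
    rw [util_eq x hc, f3, Finset.sum_pair (by decide)] at h3
    rw [util_eq x hc, f4, Finset.sum_pair (by decide)] at h4
    rw [util_eq x hc, f5, Finset.sum_pair (by decide)] at h5
    have hsub : ∑ R ∈ ({P 0 1, P 0 2, P 1 2, P 3 4, P 3 5, P 4 5} : Finset (Typ 6)), x R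
        ≤ ∑ R : Typ 6, x R :=
      Finset.sum_le_sum_of_subset (Finset.subset_univ _)
    rw [Finset.sum_insert (by decide), Finset.sum_insert (by decide),
      Finset.sum_insert (by decide), Finset.sum_insert (by decide),
      Finset.sum_insert (by decide), Finset.sum_singleton] at hsub
    simp only [] at h0 h1 h2 h3 h4 h5
    omega
end

section
/- The triple (c,k,u) belongs to the committee election monoid M_R generated by the vectors X_R = (e_R, 1, a_R), Z_R = (e_R, 0, 0), T = (0,1,0), S_i = (0,0,−e_i) if and only if c ∈ Z_{≥0}^{|R|}, k ∈ Z_{≥0}, and u is an integral-committee-feasible utility vector in the instance (c,k). -/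
/-- Membership of `(c, k, u)` in the committee election monoid `M_R`:
`(c,k,u)` is a non-negative integer combination of the generators
`X_R = (e_R, 1, a_R)`, `Z_R = (e_R, 0, 0)`, `T = (0,1,0)`, `S_i = (0,0,-e_i)`. -/
def InMonoid {n : ℕ} (c : Typ n → ℤ) (k : ℤ) (u : Fin n → ℤ) : Prop :=
  ∃ (x z : Typ n → ℕ) (t : ℕ) (s : Fin n → ℕ),
    (∀ R, c R = (x R : ℤ) + (z R : ℤ)) ∧
    (k = (∑ R : Typ n, (x R : ℤ)) + (t : ℤ)) ∧
    (∀ i, u i = (∑ R : Typ n, if i ∈ R.1 then (x R : ℤ) else 0) - (s i : ℤ))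

/-- `(c, k, u)` belongs to the committee election monoid if and only if
`c` is non-negative, `k` is non-negative, and `u` is an
integral-committee-feasible utility vector in the instance `(c, k)`. -/
theorem stmt5 (n : ℕ) (c : Typ n → ℤ) (k : ℤ) (u : Fin n → ℤ) :
    InMonoid c k u ↔
      ((∀ R, 0 ≤ c R) ∧ 0 ≤ k ∧
        ∃ x : Typ n → ℕ,
          (∀ R, (x R : ℤ) ≤ c R) ∧ ((∑ R : Typ n, (x R : ℤ)) ≤ k) ∧
          ∀ i, u i ≤ ∑ R : Typ n, if i ∈ R.1 then (x R : ℤ) else 0) := by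
  constructor
  · rintro ⟨x, z, t, s, hc, hk, hu⟩
    refine ⟨fun R => by rw [hc R]; positivity, by rw [hk]; positivity, x, ?_, ?_, ?_⟩
    · intro R; rw [hc R]; simp
    · rw [hk]; simp
    · intro i; rw [hu i]; simp
  · rintro ⟨hc, hk, x, hx, hsum, hu⟩
    refine ⟨x, fun R => (c R - x R).toNat, (k - ∑ R, (x R : ℤ)).toNat,
      fun i => ((∑ R : Typ n, if i ∈ R.1 then (x R : ℤ) else 0) - u i).toNat, ?_, ?_, ?_⟩
    · intro R; rw [Int.toNat_of_nonneg (by linarith [hx R])]; ring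
    · rw [Int.toNat_of_nonneg (by linarith)]; ring
    · intro i; rw [Int.toNat_of_nonneg (by linarith [hu i])]; ring
end

section
/- Assume every instance with n−1 voters is integralizable. Then in any minimal counterexample (c,k,u) with n voters, the intersection of all present candidate types is empty, and every voter i satisfies 1 ≤ u_i ≤ k−1. -/
/-- `(c, k, u)` is a counterexample to integralizability. -/
def Counterexample {n : ℕ} (c : Typ n → ℕ) (k : ℕ) (u : Fin n → ℤ) : Prop :=
  FracFeasible c k u ∧ ¬ IntFeasible c k u

/-- `(c, k, u)` is a minimal counterexample. -/
def MinimalCE {n : ℕ} (c : Typ n → ℕ) (k : ℕ) (u : Fin n → ℤ) : Prop :=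
  Counterexample c k u ∧
  (∀ k' : ℕ, k' < k → ∀ u' : Fin n → ℤ, ¬ Counterexample c k' u') ∧
  (∀ c' : Typ n → ℕ, (∀ R, c' R ≤ c R) → (∃ R, c' R < c R) →
    ∀ u' : Fin n → ℤ, ¬ Counterexample c' k u')

open Finset

/-- Fill lemma: any target `t` below total capacity can be hit exactly. -/
lemma fill {α : Type*} [DecidableEq α] (s : Finset α) (c : α → ℕ) :
    ∀ t : ℕ, t ≤ ∑ a ∈ s, c a →
    ∃ y : α → ℕ, (∀ a, y a ≤ c a) ∧ (∀ a, a ∉ s → y a = 0) ∧ ∑ a ∈ s, y a = t := by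
  classical
  induction s using Finset.induction_on with
  | empty =>
    intro t ht
    simp only [Finset.sum_empty, Nat.le_zero] at ht
    exact ⟨fun _ => 0, fun _ => Nat.zero_le _, fun _ _ => rfl, by simp [ht]⟩
  | @insert a s ha ih =>
    intro t ht
    rw [Finset.sum_insert ha] at ht
    obtain ⟨y, hy1, hy2, hy3⟩ := ih (t - min t (c a)) (by omega)
    refine ⟨Function.update y a (min t (c a)), ?_, ?_, ?_⟩
    · intro b
      by_cases hb : b = a
      · subst hb; rw [Function.update_self]; omega
      · simp [Function.update_of_ne hb]; exact hy1 b
    · intro b hb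
      simp only [Finset.mem_insert, not_or] at hb
      rw [Function.update_of_ne hb.1]; exact hy2 b hb.2
    · rw [Finset.sum_insert ha, Function.update_self]
      have : ∑ b ∈ s, Function.update y a (min t (c a)) b = ∑ b ∈ s, y b := by
        apply Finset.sum_congr rfl
        intro b hb
        exact Function.update_of_ne (fun h : b = a => ha (h ▸ hb)) _ _
      rw [this, hy3]; omega

/-- Padding lemma. -/
lemma pad {α : Type*} [Fintype α] [DecidableEq α] (c y : α → ℕ) (hy : ∀ a, y a ≤ c a) (t : ℕ)
    (h1 : ∑ a, y a ≤ t) (h2 : t ≤ ∑ a, c a) :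
    ∃ z : α → ℕ, (∀ a, y a ≤ z a) ∧ (∀ a, z a ≤ c a) ∧ ∑ a, z a = t := by
  have hsum : ∑ a, (c a - y a) + ∑ a, y a = ∑ a, c a := by
    rw [← Finset.sum_add_distrib]
    exact Finset.sum_congr rfl fun a _ => by have := hy a; omega
  obtain ⟨d, hd1, _, hd3⟩ := fill Finset.univ (fun a => c a - y a) (t - ∑ a, y a)
    (by show t - ∑ a, y a ≤ ∑ a, (c a - y a); omega)
  have hd3' : ∑ a, d a = t - ∑ a, y a := hd3
  refine ⟨fun a => y a + d a, fun a => Nat.le_add_right _ _,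
    fun a => by show y a + d a ≤ c a; have h3 := hd1 a; have h4 := hy a; omega, ?_⟩
  show ∑ a, (y a + d a) = t
  rw [Finset.sum_add_distrib, hd3']; omega

/-- Fiberwise sum helper over an `Option`-valued classification. -/
lemma fiber_sum_eq {α β M : Type*} [Fintype α] [DecidableEq β] [Fintype β] [AddCommMonoid M]
    (φ : α → Option β) (f : α → M) (g : β → M)
    (hnone : ∀ a, φ a = none → f a = 0)
    (hsome : ∀ b, ∑ a ∈ univ.filter (fun a => φ a = some b), f a = g b) :
    ∑ a, f a = ∑ b, g b := by
  classical
  rw [← Finset.sum_fiberwise univ φ f, Fintype.sum_option]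
  rw [Finset.sum_eq_zero (fun a ha => hnone a (Finset.mem_filter.mp ha).2), zero_add]
  exact Finset.sum_congr rfl fun b _ => hsome b

/-- The key lifting lemma: delete voter `i`, use integralizability for `m` voters,
and lift the resulting integral committee back. -/
lemma liftLemma (m : ℕ) (i : Fin (m + 1)) (c : Typ (m + 1) → ℕ) (k : ℕ) (u : Fin (m + 1) → ℤ)
    (hprev : ∀ (c' : Typ m → ℕ) (k' : ℕ), Integralizable c' k')
    (x : Typ (m + 1) → ℝ) (hx : IsFracCommittee c k x) (hu : ∀ j, (u j : ℝ) ≤ fracUtil x j) :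
    ∃ y : Typ (m + 1) → ℕ, IsIntCommittee c k y ∧
      ∀ j : Fin m, u (i.succAbove j) ≤ intUtil y (i.succAbove j) := by
  classical
  obtain ⟨hxnn, hxcap, hxk⟩ := hx
  set π : Typ (m + 1) → Finset (Fin m) :=
    fun S => univ.filter (fun j => i.succAbove j ∈ S.1) with hπdef
  have hπ : ∀ S j, j ∈ π S ↔ i.succAbove j ∈ S.1 := by intro S j; simp [hπdef]
  set φ : Typ (m + 1) → Option (Typ m) :=
    fun S => if h : (π S).Nonempty then some ⟨π S, h⟩ else none with hφdef
  have hφsome : ∀ S T, φ S = some T → T.1 = π S := by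
    intro S T h
    simp only [hφdef] at h
    split at h
    · cases h; rfl
    · cases h
  have hiff : ∀ S T, φ S = some T → ∀ j : Fin m, (j ∈ T.1 ↔ i.succAbove j ∈ S.1) := by
    intro S T h j
    rw [hφsome S T h]; exact hπ S j
  have hφnone : ∀ S, φ S = none → ∀ j, i.succAbove j ∉ S.1 := by
    intro S h j hj
    simp only [hφdef] at h
    split at h
    · cases h
    · rename_i hne; exact hne ⟨j, (hπ S j).mpr hj⟩
  set c' : Typ m → ℕ := fun T => ∑ S ∈ univ.filter (fun S => φ S = some T), c S with hc'def
  set x' : Typ m → ℝ := fun T => ∑ S ∈ univ.filter (fun S => φ S = some T), x S with hx'def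
  -- fractional feasibility of the projected vector
  have hx'nn : ∀ T, 0 ≤ x' T := fun T => Finset.sum_nonneg fun S _ => hxnn S
  have hx'cap : ∀ T, x' T ≤ (c' T : ℝ) := by
    intro T
    rw [hx'def, hc'def]
    push_cast
    exact Finset.sum_le_sum fun S _ => hxcap S
  have hx'k : ∑ T : Typ m, x' T ≤ (k : ℝ) := by
    have h1 := Finset.sum_fiberwise univ φ x
    rw [Fintype.sum_option] at h1
    have h2 : 0 ≤ ∑ S ∈ univ.filter (fun S => φ S = none), x S :=
      Finset.sum_nonneg fun S _ => hxnn S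
    calc ∑ T : Typ m, x' T ≤ ∑ S : Typ (m+1), x S := by rw [← h1]; simp only [hx'def]; linarith
    _ ≤ (k : ℝ) := hxk
  have hx'u : ∀ j : Fin m, (u (i.succAbove j) : ℝ) ≤ fracUtil x' j := by
    intro j
    have key : fracUtil x (i.succAbove j) = fracUtil x' j := by
      apply fiber_sum_eq φ _ (fun T => if j ∈ T.1 then x' T else 0)
      · intro S hS
        rw [if_neg (hφnone S hS j)]
      · intro T
        by_cases hjT : j ∈ T.1
        · rw [if_pos hjT, hx'def]
          apply Finset.sum_congr rfl
          intro S hS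
          have hT := hiff S T (Finset.mem_filter.mp hS).2 j
          rw [if_pos (hT.mp hjT)]
        · rw [if_neg hjT]
          apply Finset.sum_eq_zero
          intro S hS
          have hT := hiff S T (Finset.mem_filter.mp hS).2 j
          rw [if_neg (fun hc => hjT (hT.mpr hc))]
    rw [← key]; exact hu (i.succAbove j)
  -- integral feasibility of the projection
  obtain ⟨y', ⟨hy'c, hy'k⟩, hy'u⟩ :=
    hprev c' k (fun j => u (i.succAbove j)) ⟨x', ⟨hx'nn, hx'cap, hx'k⟩, hx'u⟩
  -- lift back to n voters fiber by fiber
  have hfill : ∀ T : Typ m, ∃ yT : Typ (m+1) → ℕ, (∀ S, yT S ≤ c S) ∧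
      (∀ S, S ∉ univ.filter (fun S => φ S = some T) → yT S = 0) ∧
      ∑ S ∈ univ.filter (fun S => φ S = some T), yT S = y' T :=
    fun T => fill _ c (y' T) (hy'c T)
  choose yf hyf1 hyf2 hyf3 using hfill
  set y : Typ (m + 1) → ℕ := fun S => (φ S).elim 0 (fun T => yf T S) with hydef
  have hy_some : ∀ S T, φ S = some T → y S = yf T S := by
    intro S T h; simp only [hydef, h, Option.elim]
  have hy_none : ∀ S, φ S = none → y S = 0 := by
    intro S h; simp only [hydef, h, Option.elim]
  have hyc : ∀ S, y S ≤ c S := by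
    intro S
    cases h : φ S with
    | none => rw [hy_none S h]; exact Nat.zero_le _
    | some T => rw [hy_some S T h]; exact hyf1 T S
  have hyk : ∑ S : Typ (m+1), y S = ∑ T : Typ m, y' T := by
    apply fiber_sum_eq φ y y' (fun S h => hy_none S h)
    intro T
    rw [← hyf3 T]
    exact Finset.sum_congr rfl fun S hS => hy_some S T (Finset.mem_filter.mp hS).2
  refine ⟨y, ⟨hyc, by rw [hyk]; exact hy'k⟩, ?_⟩
  intro j
  have key : intUtil y (i.succAbove j) = intUtil y' j := by
    apply fiber_sum_eq φ _ (fun T => if j ∈ T.1 then (y' T : ℤ) else 0)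
    · intro S hS
      rw [hy_none S hS]; simp
    · intro T
      by_cases hjT : j ∈ T.1
      · rw [if_pos hjT, ← hyf3 T]
        push_cast
        apply Finset.sum_congr rfl
        intro S hS
        have hmem := (Finset.mem_filter.mp hS).2
        have hT := hiff S T hmem j
        rw [if_pos (hT.mp hjT), hy_some S T hmem]
      · rw [if_neg hjT]
        apply Finset.sum_eq_zero
        intro S hS
        have hT := hiff S T (Finset.mem_filter.mp hS).2 j
        rw [if_neg (fun hc => hjT (hT.mpr hc))]
  rw [key]; exact hy'u j

/-- If every instance with `n - 1` voters is integralizable, then in any minimal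
counterexample `(c, k, u)` with `n` voters, the intersection of all present
candidate types is empty, and every voter `i` satisfies `1 ≤ u_i ≤ k - 1`. -/
theorem stmt7 (n : ℕ) (c : Typ n → ℕ) (k : ℕ) (u : Fin n → ℤ)
    (hprev : ∀ (c' : Typ (n - 1) → ℕ) (k' : ℕ), Integralizable c' k')
    (h : MinimalCE c k u) :
    (∀ i : Fin n, ∃ R : Typ n, 0 < c R ∧ i ∉ R.1) ∧
    (∀ i : Fin n, 1 ≤ u i ∧ u i ≤ (k : ℤ) - 1) := by
  classical
  obtain ⟨⟨hfrac, hint⟩, hmink, hminc⟩ := h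
  have claimA : ∀ i : Fin n, ∃ R : Typ n, 0 < c R ∧ i ∉ R.1 := by
    intro i
    by_contra hA
    push_neg at hA
    have hn : 0 < n := i.pos
    obtain ⟨m, rfl⟩ : ∃ m, n = m + 1 := ⟨n - 1, by omega⟩
    have hprev' : ∀ (c' : Typ m → ℕ) (k' : ℕ), Integralizable c' k' := hprev
    obtain ⟨x, hxc, hxu⟩ := hfrac
    obtain ⟨y, ⟨hyc, hyk⟩, hyu⟩ := liftLemma m i c k u hprev' x hxc hxu
    obtain ⟨hxnn, hxcap, hxk⟩ := hxc
    have hfle : fracUtil x i ≤ ∑ S : Typ (m+1), x S := by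
      apply Finset.sum_le_sum
      intro S _
      split
      · exact le_rfl
      · exact hxnn S
    have huik : u i ≤ (k : ℤ) := by exact_mod_cast (hxu i).trans (hfle.trans hxk)
    have hcsum : (∑ S : Typ (m+1), x S) ≤ ((∑ S : Typ (m+1), c S : ℕ) : ℝ) := by
      push_cast
      exact Finset.sum_le_sum fun S _ => hxcap S
    have huic : u i ≤ ((∑ S : Typ (m+1), c S : ℕ) : ℤ) := by
      exact_mod_cast (hxu i).trans (hfle.trans hcsum)
    set t := max (∑ S : Typ (m+1), y S) (u i).toNat with ht
    obtain ⟨z, hz1, hz2, hz3⟩ := pad c y hyc t (le_max_left _ _) (by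
      have h1 : (u i).toNat ≤ ∑ S : Typ (m+1), c S := Int.toNat_le.mpr huic
      have h2 : ∑ S : Typ (m+1), y S ≤ ∑ S : Typ (m+1), c S :=
        Finset.sum_le_sum fun S _ => hyc S
      omega)
    apply hint
    refine ⟨z, ⟨hz2, ?_⟩, ?_⟩
    · rw [hz3]
      have h1 : (u i).toNat ≤ k := Int.toNat_le.mpr huik
      omega
    · intro j
      by_cases hji : j = i
      · subst hji
        have hall : intUtil z j = ((∑ S : Typ (m+1), z S : ℕ) : ℤ) := by
          simp only [intUtil]
          push_cast
          apply Finset.sum_congr rfl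
          intro S _
          by_cases hS : j ∈ S.1
          · rw [if_pos hS]
          · have hc0 : c S = 0 := by
              by_contra hc0
              exact hS (hA S (Nat.pos_of_ne_zero hc0))
            have hz0 : z S = 0 := Nat.le_zero.mp (hc0 ▸ hz2 S)
            rw [if_neg hS, hz0]; simp
        rw [hall, hz3]
        calc u j ≤ ((u j).toNat : ℤ) := Int.self_le_toNat _
          _ ≤ (t : ℤ) := by
              exact_mod_cast le_max_right (∑ S : Typ (m+1), y S) (u j).toNat
      · obtain ⟨j', hj'⟩ := Fin.exists_succAbove_eq hji
        rw [← hj']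
        calc u (i.succAbove j') ≤ intUtil y (i.succAbove j') := hyu j'
          _ ≤ intUtil z (i.succAbove j') := by
              simp only [intUtil]
              apply Finset.sum_le_sum
              intro S _
              split
              · exact_mod_cast hz1 S
              · exact le_rfl
  have claimB1 : ∀ i : Fin n, 1 ≤ u i := by
    intro i
    by_contra h0
    push_neg at h0
    have hn : 0 < n := i.pos
    obtain ⟨m, rfl⟩ : ∃ m, n = m + 1 := ⟨n - 1, by omega⟩
    have hprev' : ∀ (c' : Typ m → ℕ) (k' : ℕ), Integralizable c' k' := hprev
    obtain ⟨x, hxc, hxu⟩ := hfrac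
    obtain ⟨y, hyc, hyu⟩ := liftLemma m i c k u hprev' x hxc hxu
    apply hint
    refine ⟨y, hyc, ?_⟩
    intro j
    by_cases hji : j = i
    · subst hji
      have hnn : (0:ℤ) ≤ intUtil y j := by
        simp only [intUtil]
        apply Finset.sum_nonneg
        intro S _
        split
        · positivity
        · exact le_rfl
      omega
    · obtain ⟨j', hj'⟩ := Fin.exists_succAbove_eq hji
      rw [← hj']; exact hyu j'
  refine ⟨claimA, fun i => ⟨claimB1 i, ?_⟩⟩
  by_contra h2
  push_neg at h2
  have hk : (k : ℤ) ≤ u i := by omega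
  obtain ⟨R₀, hR₀c, hR₀i⟩ := claimA i
  obtain ⟨x, ⟨hxnn, hxcap, hxk⟩, hxu⟩ := hfrac
  have hsum : fracUtil x i + x R₀ ≤ ∑ S : Typ n, x S := by
    have h1 : ∀ S : Typ n, (if i ∈ S.1 then x S else 0) + (if S = R₀ then x S else 0) ≤ x S := by
      intro S
      by_cases ha : i ∈ S.1
      · have hb : S ≠ R₀ := fun hc => hR₀i (hc ▸ ha)
        rw [if_pos ha, if_neg hb]; simp
      · rw [if_neg ha]
        by_cases hb : S = R₀ <;> simp [hb, hxnn S]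
    calc fracUtil x i + x R₀
        = ∑ S : Typ n, ((if i ∈ S.1 then x S else 0) + (if S = R₀ then x S else 0)) := by
          rw [Finset.sum_add_distrib, Finset.sum_ite_eq' Finset.univ R₀ x,
            if_pos (Finset.mem_univ R₀)]
          rfl
      _ ≤ ∑ S : Typ n, x S := Finset.sum_le_sum fun S _ => h1 S
  have hxR0 : x R₀ = 0 := by
    have hui : ((k:ℤ) : ℝ) ≤ fracUtil x i := le_trans (by exact_mod_cast hk) (hxu i)
    have hnn := hxnn R₀
    push_cast at hui
    linarith
  refine hminc (Function.update c R₀ 0) (fun R => ?_) ⟨R₀, ?_⟩ u ⟨⟨x, ⟨hxnn, fun R => ?_, hxk⟩, hxu⟩, ?_⟩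
  · by_cases hR : R = R₀
    · subst hR; rw [Function.update_self]; exact Nat.zero_le _
    · rw [Function.update_of_ne hR]
  · rw [Function.update_self]; exact hR₀c
  · by_cases hR : R = R₀
    · subst hR; rw [Function.update_self, hxR0]; simp
    · rw [Function.update_of_ne hR]; exact hxcap R
  · rintro ⟨z, ⟨hz1, hz2⟩, hz3⟩
    apply hint
    refine ⟨z, ⟨fun R => ?_, hz2⟩, hz3⟩
    by_cases hR : R = R₀
    · subst hR; exact le_trans (hz1 R) (by rw [Function.update_self]; exact Nat.zero_le _)
    · exact le_trans (hz1 R) (by rw [Function.update_of_ne hR])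
end

section
/- For n = 4 voters, every instance (c,k) is integralizable: every integer utility vector that is fractional-committee-feasible is also integral-committee-feasible. -/
namespace S12
open Finset

-- custom: sum over biUnion bounded by sum of sums, for nonneg f
lemma my_sum_biUnion_le {α β : Type*} [DecidableEq α] [DecidableEq β]
    (s : Finset α) (t : α → Finset β) (f : β → ℝ) (hf : ∀ b, 0 ≤ f b) :
    ∑ b ∈ s.biUnion t, f b ≤ ∑ a ∈ s, ∑ b ∈ t a, f b := by
  induction s using Finset.induction with
  | empty => simp
  | @insert a s hx ih =>
    rw [Finset.biUnion_insert, Finset.sum_insert hx]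
    calc ∑ b ∈ t a ∪ s.biUnion t, f b
        ≤ (∑ b ∈ t a, f b) + ∑ b ∈ s.biUnion t, f b := by
          have h := Finset.sum_union_inter (s₁ := t a) (s₂ := s.biUnion t) (f := f)
          have h2 : 0 ≤ ∑ b ∈ t a ∩ s.biUnion t, f b :=
            Finset.sum_nonneg fun b _ => hf b
          linarith
    _ ≤ (∑ b ∈ t a, f b) + ∑ a ∈ s, ∑ b ∈ t a, f b := by linarith [ih]

set_option maxRecDepth 10000 in
lemma L1fin3 : ∀ A : Finset (Finset (Fin 3)),
    (∀ E ∈ A, ∀ F ∈ A, E ≠ F → ¬ E ⊆ F) → (∅ ∉ A) → A.card ≤ 3 := by decide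

-- antichain all whose members contain i has card ≤ 3
lemma antichain_through (i : Fin 4) (A : Finset (Finset (Fin 4)))
    (hanti : ∀ E ∈ A, ∀ F ∈ A, E ≠ F → ¬ E ⊆ F)
    (hall : ∀ F ∈ A, i ∈ F) : A.card ≤ 3 := by
  by_cases hcard : A.card ≤ 1
  · omega
  push_neg at hcard
  -- {i} ∉ A
  have hsing : {i} ∉ A := by
    intro hmem
    obtain ⟨F, hF, hFne⟩ := Finset.exists_mem_ne hcard {i}
    exact hanti {i} hmem F hF (Ne.symm hFne) (Finset.singleton_subset_iff.mpr (hall F hF))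
  set φ : Finset (Fin 4) → Finset (Fin 3) :=
    fun E => Finset.univ.filter (fun k => i.succAbove k ∈ E) with hφ
  have hrefl : ∀ E ∈ A, ∀ F ∈ A, φ E ⊆ φ F → E ⊆ F := by
    intro E hE F hF hsub j hj
    by_cases hji : j = i
    · exact hji ▸ hall F hF
    · obtain ⟨k, hk⟩ := Fin.exists_succAbove_eq hji
      have : k ∈ φ E := by simp [hφ, hk, hj]
      have h2 := hsub this
      simp only [hφ, Finset.mem_filter, hk] at h2
      exact h2.2
  have hinj : Set.InjOn φ A := by
    intro E hE F hF hEF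
    by_contra hne
    exact hanti E hE F hF hne (hrefl E hE F hF (le_of_eq hEF))
  have hcard2 : (A.image φ).card = A.card := Finset.card_image_of_injOn hinj
  have hanti' : ∀ E' ∈ A.image φ, ∀ F' ∈ A.image φ, E' ≠ F' → ¬ E' ⊆ F' := by
    intro E' hE' F' hF' hne hsub
    obtain ⟨E, hE, rfl⟩ := Finset.mem_image.mp hE'
    obtain ⟨F, hF, rfl⟩ := Finset.mem_image.mp hF'
    have hEFne : E ≠ F := fun h => hne (h ▸ rfl)
    exact hanti E hE F hF hEFne (hrefl E hE F hF hsub)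
  have hempty : ∅ ∉ A.image φ := by
    intro hmem
    obtain ⟨E, hE, hEeq⟩ := Finset.mem_image.mp hmem
    -- E maps to ∅ means E ⊆ {i}, so E = {i} (since i ∈ E)
    have hEi : E = {i} := by
      apply Finset.Subset.antisymm
      · intro j hj
        by_cases hji : j = i
        · simp [hji]
        · obtain ⟨k, hk⟩ := Fin.exists_succAbove_eq (hji : j ≠ i)
          have : k ∈ φ E := by simp [hφ, hk, hj]
          rw [hEeq] at this
          simp at this
      · exact Finset.singleton_subset_iff.mpr (hall E hE)
    exact hsing (hEi ▸ hE)
  have := L1fin3 (A.image φ) hanti' hempty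
  omega

/-! ### Basic utilities -/

lemma fracUtil_nonneg {x : Typ 4 → ℝ} (hx : ∀ R, 0 ≤ x R) (i : Fin 4) :
    0 ≤ fracUtil x i := by
  apply Finset.sum_nonneg
  intro R _
  split
  · exact hx R
  · exact le_refl _

lemma fracUtil_le_tot {x : Typ 4 → ℝ} (hx : ∀ R, 0 ≤ x R) (i : Fin 4) :
    fracUtil x i ≤ ∑ R : Typ 4, x R := by
  apply Finset.sum_le_sum
  intro R _
  split
  · exact le_refl _
  · exact hx R

lemma fracUtil_sub (x z : Typ 4 → ℝ) (i : Fin 4) :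
    fracUtil (fun R => x R - z R) i = fracUtil x i - fracUtil z i := by
  unfold fracUtil
  rw [← Finset.sum_sub_distrib]
  apply Finset.sum_congr rfl
  intro R _
  split <;> simp

lemma fracUtil_single (R₀ : Typ 4) (a : ℝ) (i : Fin 4) :
    fracUtil (fun R => if R = R₀ then a else 0) i = if i ∈ R₀.1 then a else 0 := by
  unfold fracUtil
  rw [Finset.sum_eq_single R₀]
  · simp
  · intro R _ hne
    simp [hne]
  · simp

lemma intUtil_nonneg (y : Typ 4 → ℕ) (i : Fin 4) : 0 ≤ intUtil y i := by
  apply Finset.sum_nonneg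
  intro R _
  split <;> positivity

lemma intUtil_add_single (y : Typ 4 → ℕ) (R₀ : Typ 4) (i : Fin 4) :
    intUtil (fun R => y R + if R = R₀ then 1 else 0) i
      = intUtil y i + (if i ∈ R₀.1 then 1 else 0) := by
  unfold intUtil
  have : ∀ R : Typ 4,
      (if i ∈ R.1 then ((y R + if R = R₀ then 1 else 0 : ℕ) : ℤ) else 0)
        = (if i ∈ R.1 then (y R : ℤ) else 0)
          + (if i ∈ R.1 then (if R = R₀ then (1:ℤ) else 0) else 0) := by
    intro R
    split <;> simp
  rw [Finset.sum_congr rfl (fun R _ => this R), Finset.sum_add_distrib]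
  congr 1
  rw [Finset.sum_eq_single R₀]
  · split <;> simp
  · intro R _ hne
    simp [hne]
  · simp

lemma intUtil_indicator (Ts : Finset (Typ 4)) (i : Fin 4) :
    intUtil (fun R => if R ∈ Ts then 1 else 0) i
      = ((Ts.filter (fun R => i ∈ R.1)).card : ℤ) := by
  unfold intUtil
  have key : ∀ R : Typ 4,
      (if i ∈ R.1 then (((if R ∈ Ts then 1 else 0 : ℕ)) : ℤ) else 0)
        = if R ∈ Ts.filter (fun R => i ∈ R.1) then 1 else 0 := by
    intro R
    by_cases hR : R ∈ Ts <;> by_cases hi : i ∈ R.1 <;>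
      simp [hR, hi, Finset.mem_filter]
  rw [Finset.sum_congr rfl (fun R _ => key R)]
  rw [Finset.sum_ite_mem, Finset.univ_inter, Finset.sum_const]
  simp

lemma sum_indicator_card (Ts : Finset (Typ 4)) :
    ((∑ R : Typ 4, (if R ∈ Ts then (1:ℕ) else 0) : ℕ) : ℤ) = Ts.card := by
  rw [Finset.sum_ite_mem, Finset.univ_inter, Finset.sum_const]
  simp

/-! ### The rounding theorem -/

/-- Mass of types whose `D`-trace is contained in `E`. -/
noncomputable def Wm (x : Typ 4 → ℝ) (D E : Finset (Fin 4)) : ℝ :=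
  ∑ R ∈ Finset.univ.filter (fun R : Typ 4 => R.1 ∩ D ⊆ E), x R

set_option maxHeartbeats 2000000 in
/-- The hard combinatorial core. -/
lemma hard_case (x : Typ 4 → ℝ) (hx : ∀ R, 0 ≤ x R) (hx1 : ∀ R, x R < 1)
    (D : Finset (Fin 4)) (hD : D = Finset.univ.filter (fun i => 1 ≤ ⌊fracUtil x i⌋))
    (hDne : D.Nonempty)
    (hhard : ∀ R₀ : Typ 4, 0 < x R₀ →
      Wm x D (R₀.1 ∩ D) < (∑ R : Typ 4, x R) - (⌈∑ R : Typ 4, x R⌉ - 1 : ℤ)) :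
    ∃ Ts : Finset (Typ 4), (Ts.card : ℤ) ≤ ⌈∑ R : Typ 4, x R⌉ ∧
      (∀ R ∈ Ts, 0 < x R) ∧
      ∀ i ∈ D, ⌊fracUtil x i⌋ ≤ ((Ts.filter (fun R => i ∈ R.1)).card : ℤ) := by
  classical
  set tot : ℝ := ∑ R : Typ 4, x R with htotdef
  set b : ℤ := ⌈∑ R : Typ 4, x R⌉ with hbdef
  set m : Fin 4 → ℤ := fun i => ⌊fracUtil x i⌋ with hmdef
  set Δ : ℝ := tot - ((b : ℝ) - 1) with hΔdef
  have hm_le_cov : ∀ i, (m i : ℝ) ≤ fracUtil x i := fun i => Int.floor_le _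
  have hm1 : ∀ i ∈ D, 1 ≤ m i := by
    intro i hi
    rw [hD] at hi
    simpa [hmdef] using (Finset.mem_filter.mp hi).2
  have hcov1 : ∀ i ∈ D, (1:ℝ) ≤ fracUtil x i := by
    intro i hi
    have h1 := hm1 i hi
    calc (1:ℝ) = ((1:ℤ):ℝ) := by norm_num
    _ ≤ (m i : ℝ) := by exact_mod_cast h1
    _ ≤ _ := hm_le_cov i
  obtain ⟨i₀, hi₀D⟩ := hDne
  have htot1 : (1:ℝ) ≤ tot := le_trans (hcov1 i₀ hi₀D) (fracUtil_le_tot hx i₀)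
  have hΔpos : 0 < Δ := by
    have := Int.ceil_lt_add_one tot
    simp only [hΔdef]
    push_cast at this ⊢
    simp only [hbdef, ← htotdef]
    linarith
  have hΔ1 : Δ ≤ 1 := by
    have := Int.le_ceil tot
    simp only [hΔdef, hbdef, ← htotdef]
    push_cast at this ⊢
    linarith
  have hb1 : 1 ≤ b := by
    have h1 : (1:ℝ) ≤ (b:ℝ) := by
      have := Int.le_ceil tot
      simp only [hbdef, ← htotdef]
      linarith
    exact_mod_cast h1
  set supp : Finset (Typ 4) := Finset.univ.filter (fun R => 0 < x R) with hsuppdef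
  have hsupp0 : ∀ R, R ∉ supp → x R = 0 := by
    intro R hR
    simp only [hsuppdef, Finset.mem_filter, Finset.mem_univ, true_and] at hR
    push_neg at hR
    linarith [hx R]
  have htotsupp : tot = ∑ R ∈ supp, x R := by
    simp only [htotdef]
    exact (Finset.sum_subset (Finset.subset_univ supp)
      (fun R _ hR => hsupp0 R hR)).symm
  set trc : Typ 4 → Finset (Fin 4) := fun R => R.1 ∩ D with htrcdef
  set P : Finset (Finset (Fin 4)) := supp.image trc with hPdef
  have hW_lt : ∀ E ∈ P, Wm x D E < Δ := by
    intro E hE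
    obtain ⟨R, hR, rfl⟩ := Finset.mem_image.mp hE
    have hRpos : 0 < x R := by
      simp only [hsuppdef, Finset.mem_filter] at hR
      exact hR.2
    have := hhard R hRpos
    simp only [hΔdef, hbdef, ← htotdef]
    push_cast at this ⊢
    simpa [htrcdef] using this
  have hW_nonneg : ∀ E, 0 ≤ Wm x D E :=
    fun E => Finset.sum_nonneg (fun R _ => hx R)
  have hW_single : ∀ (E : Finset (Fin 4)) (R : Typ 4), trc R ⊆ E → x R ≤ Wm x D E := by
    intro E R hRE
    apply Finset.single_le_sum (f := x) (fun R _ => hx R)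
    simp only [Finset.mem_filter, Finset.mem_univ, true_and]
    exact hRE
  set A : Finset (Finset (Fin 4)) := P.filter (fun E => ∀ F ∈ P, ¬ E ⊂ F) with hAdef
  have hAP : A ⊆ P := Finset.filter_subset _ _
  have hmaxA : ∀ E ∈ P, ∃ F ∈ A, E ⊆ F := by
    intro E hE
    set Q : Finset (Finset (Fin 4)) := P.filter (fun F => E ⊆ F) with hQdef
    have hQne : Q.Nonempty := ⟨E, by simp [hQdef, hE]⟩
    obtain ⟨F, hFQ, hFmax⟩ : ∃ F ∈ Q, ∀ G ∈ Q, ¬ F < G := by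
      obtain ⟨F, hF⟩ := Finset.exists_maximal hQne
      exact ⟨F, hF.1, fun G hG h => lt_irrefl F (lt_of_lt_of_le h (hF.2 hG h.le))⟩
    simp only [hQdef, Finset.mem_filter] at hFQ
    refine ⟨F, ?_, hFQ.2⟩
    simp only [hAdef, Finset.mem_filter]
    refine ⟨hFQ.1, ?_⟩
    intro G hG hFG
    have hGQ : G ∈ Q := by
      simp only [hQdef, Finset.mem_filter]
      exact ⟨hG, hFQ.2.trans hFG.subset⟩
    exact hFmax G hGQ hFG
  have hanti : ∀ E ∈ A, ∀ F ∈ A, E ≠ F → ¬ E ⊆ F := by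
    intro E hE F hF hne hsub
    simp only [hAdef, Finset.mem_filter] at hE hF
    exact hE.2 F hF.1 (lt_of_le_of_ne hsub hne)
  have hPsubD : ∀ E ∈ P, E ⊆ D := by
    intro E hE
    obtain ⟨R, _, rfl⟩ := Finset.mem_image.mp hE
    simp [htrcdef]
  have hPneD : ∀ E ∈ P, E ≠ D := by
    intro E hE heq
    have h1 : Wm x D E < Δ := hW_lt E hE
    have h2 : tot ≤ Wm x D E := by
      rw [htotsupp]
      subst heq
      apply Finset.sum_le_sum_of_subset_of_nonneg
      · intro R hR
        simp only [Finset.mem_filter, Finset.mem_univ, true_and]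
        exact Finset.inter_subset_right
      · intro R _ _
        exact hx R
    linarith
  -- trace of every supportive type is below some maximal element
  have hsupp_max : ∀ R ∈ supp, ∃ F ∈ A, trc R ⊆ F := by
    intro R hR
    obtain ⟨F, hF, hsub⟩ := hmaxA (trc R) (Finset.mem_image_of_mem trc hR)
    exact ⟨F, hF, hsub⟩
  -- total mass bounded by sum of W over A
  have htot_le : tot ≤ ∑ F ∈ A, Wm x D F := by
    rw [htotsupp]
    have hsub : supp ⊆ A.biUnion
        (fun F => Finset.univ.filter (fun R : Typ 4 => R.1 ∩ D ⊆ F)) := by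
      intro R hR
      obtain ⟨F, hF, hsubF⟩ := hsupp_max R hR
      rw [Finset.mem_biUnion]
      refine ⟨F, hF, ?_⟩
      simp only [Finset.mem_filter, Finset.mem_univ, true_and]
      simpa [htrcdef] using hsubF
    calc ∑ R ∈ supp, x R
        ≤ ∑ R ∈ A.biUnion (fun F => Finset.univ.filter (fun R : Typ 4 => R.1 ∩ D ⊆ F)), x R :=
          Finset.sum_le_sum_of_subset_of_nonneg hsub (fun R _ _ => hx R)
    _ ≤ ∑ F ∈ A, ∑ R ∈ Finset.univ.filter (fun R : Typ 4 => R.1 ∩ D ⊆ F), x R :=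
          my_sum_biUnion_le A _ x hx
    _ = ∑ F ∈ A, Wm x D F := rfl
  -- coverage bounded by sum of W over A elements containing i
  have hcov_le : ∀ i ∈ D, fracUtil x i ≤ ∑ F ∈ A.filter (fun F => i ∈ F), Wm x D F := by
    intro i hi
    have h1 : fracUtil x i = ∑ R ∈ Finset.univ.filter (fun R : Typ 4 => i ∈ R.1), x R := by
      unfold fracUtil
      rw [Finset.sum_filter]
    rw [h1]
    have h2 : ∑ R ∈ Finset.univ.filter (fun R : Typ 4 => i ∈ R.1), x R
        = ∑ R ∈ supp.filter (fun R : Typ 4 => i ∈ R.1), x R := by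
      apply (Finset.sum_subset ?_ ?_).symm
      · exact Finset.filter_subset_filter _ (Finset.subset_univ supp)
      · intro R hR1 hR2
        apply hsupp0
        intro hRs
        simp only [Finset.mem_filter, Finset.mem_univ, true_and] at hR1
        exact hR2 (Finset.mem_filter.mpr ⟨hRs, hR1⟩)
    rw [h2]
    have hsub : supp.filter (fun R : Typ 4 => i ∈ R.1) ⊆
        (A.filter (fun F => i ∈ F)).biUnion
          (fun F => Finset.univ.filter (fun R : Typ 4 => R.1 ∩ D ⊆ F)) := by
      intro R hR
      simp only [Finset.mem_filter] at hR
      obtain ⟨F, hF, hsubF⟩ := hsupp_max R hR.1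
      rw [Finset.mem_biUnion]
      refine ⟨F, ?_, ?_⟩
      · simp only [Finset.mem_filter]
        refine ⟨hF, hsubF ?_⟩
        simp only [htrcdef, Finset.mem_inter]
        exact ⟨hR.2, hi⟩
      · simp only [Finset.mem_filter, Finset.mem_univ, true_and]
        simpa [htrcdef] using hsubF
    calc ∑ R ∈ supp.filter (fun R : Typ 4 => i ∈ R.1), x R
        ≤ ∑ R ∈ (A.filter (fun F => i ∈ F)).biUnion
            (fun F => Finset.univ.filter (fun R : Typ 4 => R.1 ∩ D ⊆ F)), x R :=
          Finset.sum_le_sum_of_subset_of_nonneg hsub (fun R _ _ => hx R)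
    _ ≤ ∑ F ∈ A.filter (fun F => i ∈ F),
          ∑ R ∈ Finset.univ.filter (fun R : Typ 4 => R.1 ∩ D ⊆ F), x R :=
          my_sum_biUnion_le _ _ x hx
    _ = ∑ F ∈ A.filter (fun F => i ∈ F), Wm x D F := rfl
  have htotb : tot ≤ (b:ℝ) := by
    have := Int.le_ceil tot
    simp only [hbdef, ← htotdef]
    exact this
  have hAne_of : ∀ i ∈ D, (A.filter (fun F => i ∈ F)).Nonempty := by
    intro i hi
    by_contra h
    rw [Finset.not_nonempty_iff_eq_empty] at h
    have h2 := hcov_le i hi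
    rw [h, Finset.sum_empty] at h2
    linarith [hcov1 i hi]
  have hdeg : ∀ i ∈ D, m i + 1 ≤ ((A.filter (fun F => i ∈ F)).card : ℤ) := by
    intro i hi
    set dgi : ℕ := (A.filter (fun F => i ∈ F)).card with hdgi
    have h1 : fracUtil x i < (dgi : ℝ) * Δ := by
      calc fracUtil x i ≤ ∑ F ∈ A.filter (fun F => i ∈ F), Wm x D F := hcov_le i hi
      _ < ∑ _F ∈ A.filter (fun F => i ∈ F), Δ := by
          apply Finset.sum_lt_sum_of_nonempty (hAne_of i hi)
          intro F hF
          exact hW_lt F (hAP (Finset.mem_filter.mp hF).1)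
      _ = (dgi : ℝ) * Δ := by rw [Finset.sum_const, nsmul_eq_mul]
    have h2 : (m i : ℝ) < (dgi : ℝ) := by
      have h3 : (0:ℝ) ≤ (dgi:ℝ) := Nat.cast_nonneg _
      have h5 : (0:ℝ) ≤ (dgi:ℝ) * (1 - Δ) := mul_nonneg h3 (by linarith)
      nlinarith [hm_le_cov i]
    have h4 : m i < (dgi : ℤ) := by exact_mod_cast h2
    omega
  have hAne : A.Nonempty := by
    obtain ⟨F, hF⟩ := hAne_of i₀ hi₀D
    exact ⟨F, (Finset.mem_filter.mp hF).1⟩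
  have hAcard1 : 1 ≤ A.card := Finset.card_pos.mpr hAne
  have hbcard : b + 1 ≤ (A.card : ℤ) := by
    have h1 : tot < (A.card : ℝ) * Δ := by
      calc tot ≤ ∑ F ∈ A, Wm x D F := htot_le
      _ < ∑ _F ∈ A, Δ :=
          Finset.sum_lt_sum_of_nonempty hAne (fun F hF => hW_lt F (hAP hF))
      _ = (A.card : ℝ) * Δ := by rw [Finset.sum_const, nsmul_eq_mul]
    have h2 : (b:ℝ) - 1 < ((A.card:ℝ) - 1) * Δ := by
      have : tot = (b:ℝ) - 1 + Δ := by simp only [hΔdef]; ring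
      nlinarith
    have h3 : (1:ℝ) ≤ (A.card:ℝ) := by exact_mod_cast hAcard1
    have h4 : ((A.card:ℝ) - 1) * Δ ≤ (A.card:ℝ) - 1 := by nlinarith
    have h5 : (b:ℝ) < (A.card:ℝ) := by linarith
    have h6 : b < (A.card : ℤ) := by exact_mod_cast h5
    omega
  have hsuppne : supp.Nonempty := by
    by_contra hemp
    rw [Finset.not_nonempty_iff_eq_empty] at hemp
    rw [htotsupp, hemp, Finset.sum_empty] at htot1
    linarith
  have hcov_erase : ∀ (i : Fin 4) (R : Typ 4), i ∉ R.1 →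
      fracUtil x i + x R ≤ tot := by
    intro i R hiR
    have h1 : fracUtil x i ≤ ∑ S ∈ Finset.univ.erase R, x S := by
      unfold fracUtil
      rw [← Finset.add_sum_erase Finset.univ _ (Finset.mem_univ R)]
      rw [if_neg hiR]
      rw [zero_add]
      apply Finset.sum_le_sum
      intro S _
      split
      · exact le_refl _
      · exact hx S
    have h2 : x R + ∑ S ∈ Finset.univ.erase R, x S = tot :=
      Finset.add_sum_erase Finset.univ x (Finset.mem_univ R)
    linarith
  have hb2 : 2 ≤ b := by
    by_contra hcon
    push_neg at hcon
    have hbeq : b = 1 := by omega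
    obtain ⟨R₁, hR₁⟩ := hsuppne
    have hall : ∀ i ∈ D, ∀ R ∈ supp, i ∈ R.1 := by
      intro i hi R hR
      by_contra hiR
      have h1 := hcov_erase i R hiR
      have hxR : 0 < x R := by
        simp only [hsuppdef, Finset.mem_filter] at hR
        exact hR.2
      have h2 : tot ≤ 1 := by
        rw [hbeq] at htotb
        simpa using htotb
      linarith [hcov1 i hi]
    have htrc : trc R₁ = D := by
      apply Finset.Subset.antisymm
      · simp [htrcdef]
      · intro i hi
        simp only [htrcdef, Finset.mem_inter]
        exact ⟨hall i hi R₁ hR₁, hi⟩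
    exact hPneD (trc R₁) (Finset.mem_image_of_mem trc hR₁) htrc
  have hmb : ∀ i ∈ D, (∃ F ∈ A, i ∉ F) → m i ≤ b - 1 := by
    intro i hi hex
    obtain ⟨F, hFA, hiF⟩ := hex
    obtain ⟨R, hRs, hRtr⟩ := Finset.mem_image.mp (hAP hFA)
    have hxR : 0 < x R := by
      simp only [hsuppdef, Finset.mem_filter] at hRs
      exact hRs.2
    have hWpos : 0 < Wm x D F :=
      lt_of_lt_of_le hxR (hW_single F R (by rw [hRtr]))
    have hdisj : Disjoint (Finset.univ.filter (fun S : Typ 4 => i ∈ S.1))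
        (Finset.univ.filter (fun S : Typ 4 => S.1 ∩ D ⊆ F)) := by
      rw [Finset.disjoint_left]
      intro S h1 h2
      simp only [Finset.mem_filter, Finset.mem_univ, true_and] at h1 h2
      exact hiF (h2 (Finset.mem_inter.mpr ⟨h1, hi⟩))
    have hsum : fracUtil x i + Wm x D F ≤ tot := by
      have h1 : fracUtil x i = ∑ S ∈ Finset.univ.filter (fun S : Typ 4 => i ∈ S.1), x S := by
        unfold fracUtil
        rw [Finset.sum_filter]
      rw [h1]
      unfold Wm
      rw [← Finset.sum_union hdisj]
      rw [htotdef]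
      apply Finset.sum_le_sum_of_subset_of_nonneg (Finset.subset_univ _)
      intro S _ _
      exact hx S
    have h2 : (m i : ℝ) < (b : ℝ) := by
      calc (m i : ℝ) ≤ fracUtil x i := hm_le_cov i
      _ < tot := by linarith
      _ ≤ (b:ℝ) := htotb
    have h3 : m i < b := by exact_mod_cast h2
    omega
  have hNF3 : ∀ (V : Finset (Fin 4)), V ⊆ D → ∀ μ : ℕ,
      (∀ F ∈ A, (F ∩ V).card ≤ μ) → (∑ i ∈ V, m i) ≤ (μ : ℤ) * b := by
    intro V hVD μ hμ
    have hreal : (∑ i ∈ V, (m i : ℝ)) ≤ (μ : ℝ) * (b : ℝ) := by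
      have h1 : ∑ i ∈ V, (m i : ℝ) ≤ ∑ i ∈ V, fracUtil x i :=
        Finset.sum_le_sum (fun i _ => hm_le_cov i)
      have h2 : ∑ i ∈ V, fracUtil x i
          = ∑ R : Typ 4, ((R.1 ∩ V).card : ℝ) * x R := by
        unfold fracUtil
        rw [Finset.sum_comm]
        apply Finset.sum_congr rfl
        intro R _
        rw [Finset.sum_ite_mem]
        rw [Finset.sum_const]
        rw [nsmul_eq_mul]
        congr 2
        rw [Finset.inter_comm]
      have h3 : ∑ R : Typ 4, ((R.1 ∩ V).card : ℝ) * x R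
          ≤ ∑ R : Typ 4, (μ : ℝ) * x R := by
        apply Finset.sum_le_sum
        intro R _
        by_cases hR : R ∈ supp
        · have hcard : (R.1 ∩ V).card ≤ μ := by
            obtain ⟨F, hFA, hsubF⟩ := hsupp_max R hR
            have hss : R.1 ∩ V ⊆ F ∩ V := by
              intro j hj
              rw [Finset.mem_inter] at hj ⊢
              refine ⟨hsubF ?_, hj.2⟩
              simp only [htrcdef, Finset.mem_inter]
              exact ⟨hj.1, hVD hj.2⟩
            calc (R.1 ∩ V).card ≤ (F ∩ V).card := Finset.card_le_card hss
            _ ≤ μ := hμ F hFA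
          exact mul_le_mul_of_nonneg_right (by exact_mod_cast hcard) (hx R)
        · rw [hsupp0 R hR]
          simp
      have h4 : ∑ R : Typ 4, (μ : ℝ) * x R = (μ:ℝ) * tot := by
        rw [← Finset.mul_sum, htotdef]
      have h5 : (μ:ℝ) * tot ≤ (μ:ℝ) * (b:ℝ) :=
        mul_le_mul_of_nonneg_left htotb (Nat.cast_nonneg _)
      linarith
    have hcast : ((∑ i ∈ V, m i : ℤ) : ℝ) ≤ (((μ:ℤ) * b : ℤ) : ℝ) := by
      push_cast at hreal ⊢
      exact hreal
    exact_mod_cast hcast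
  -- reduction: it suffices to find a suitable subfamily of A
  have main : ∀ TA : Finset (Finset (Fin 4)), TA ⊆ A → ((TA.card : ℤ) ≤ b) →
      (∀ i ∈ D, m i ≤ ((TA.filter (fun F => i ∈ F)).card : ℤ)) →
      ∃ Ts : Finset (Typ 4), (Ts.card : ℤ) ≤ ⌈∑ R : Typ 4, x R⌉ ∧
        (∀ R ∈ Ts, 0 < x R) ∧
        ∀ i ∈ D, ⌊fracUtil x i⌋ ≤ ((Ts.filter (fun R => i ∈ R.1)).card : ℤ) := by
    intro TA hTA hTAcard hTAcov
    set rp : Finset (Fin 4) → Typ 4 := fun F =>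
      if h : ∃ R, R ∈ supp ∧ trc R = F then h.choose
      else ⟨({0} : Finset (Fin 4)), Finset.singleton_nonempty 0⟩ with hrpdef
    have hrpspec : ∀ F ∈ P, rp F ∈ supp ∧ trc (rp F) = F := by
      intro F hF
      obtain ⟨R, hR, h⟩ := Finset.mem_image.mp hF
      have hex : ∃ R, R ∈ supp ∧ trc R = F := ⟨R, hR, h⟩
      simp only [hrpdef, dif_pos hex]
      exact hex.choose_spec
    have hTAP : ∀ F ∈ TA, F ∈ P := fun F hF => hAP (hTA hF)
    refine ⟨TA.image rp, ?_, ?_, ?_⟩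
    · calc ((TA.image rp).card : ℤ) ≤ (TA.card : ℤ) := by
            exact_mod_cast Finset.card_image_le
      _ ≤ b := hTAcard
    · intro R hR
      obtain ⟨F, hF, rfl⟩ := Finset.mem_image.mp hR
      have := (hrpspec F (hTAP F hF)).1
      simp only [hsuppdef, Finset.mem_filter] at this
      exact this.2
    · intro i hi
      have h1 : m i ≤ ((TA.filter (fun F => i ∈ F)).card : ℤ) := hTAcov i hi
      have h2 : (TA.filter (fun F => i ∈ F)).card
          ≤ ((TA.image rp).filter (fun R => i ∈ R.1)).card := by
        apply Finset.card_le_card_of_injOn rp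
        · intro F hF
          rw [Finset.mem_coe, Finset.mem_filter] at hF ⊢
          refine ⟨Finset.mem_image_of_mem rp hF.1, ?_⟩
          have hspec := hrpspec F (hTAP F hF.1)
          have : i ∈ trc (rp F) := hspec.2.symm ▸ hF.2
          simp only [htrcdef, Finset.mem_inter] at this
          exact this.1
        · intro F1 hF1 F2 hF2 heq
          rw [Finset.coe_filter, Set.mem_setOf_eq] at hF1 hF2
          have e1 := (hrpspec F1 (hTAP F1 hF1.1)).2
          have e2 := (hrpspec F2 (hTAP F2 hF2.1)).2
          rw [← e1, ← e2, heq]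
      calc m i ≤ ((TA.filter (fun F => i ∈ F)).card : ℤ) := h1
      _ ≤ _ := by exact_mod_cast h2
  -- members of A are nonempty and not singletons of demanded voters
  have hAnonempty : ∀ E ∈ A, E.Nonempty := by
    intro E hE
    rw [Finset.nonempty_iff_ne_empty]
    intro hemp
    obtain ⟨F, hFf⟩ := hAne_of i₀ hi₀D
    rw [Finset.mem_filter] at hFf
    have hne : E ≠ F := by
      intro h
      rw [hemp] at h
      rw [← h] at hFf
      exact Finset.notMem_empty i₀ hFf.2
    exact hanti E hE F hFf.1 hne (hemp ▸ Finset.empty_subset F)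
  have hsingleton_not : ∀ j ∈ D, ({j} : Finset (Fin 4)) ∉ A := by
    intro j hj hmem
    have hdg := hdeg j hj
    have hm1j := hm1 j hj
    have hcard2 : 1 < (A.filter (fun F => j ∈ F)).card := by omega
    obtain ⟨F, hFf, hFne⟩ :=
      Finset.exists_mem_ne hcard2 ({j} : Finset (Fin 4))
    rw [Finset.mem_filter] at hFf
    exact hanti {j} hmem F hFf.1 (Ne.symm hFne)
      (Finset.singleton_subset_iff.mpr hFf.2)
  by_cases hlast : (A.card : ℤ) ≤ b + 1
  · -- b = |A| - 1 : take A minus one element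
    obtain ⟨F₀, hF₀⟩ := hAne
    apply main (A.erase F₀) (Finset.erase_subset F₀ A)
    · have h1 : (A.erase F₀).card = A.card - 1 := Finset.card_erase_of_mem hF₀
      have h2 : 1 ≤ A.card := hAcard1
      have h3 : ((A.erase F₀).card : ℤ) = (A.card : ℤ) - 1 := by
        rw [h1]
        push_cast [h2]
        ring
      omega
    · intro i hi
      have hdg := hdeg i hi
      have hsub : A.filter (fun F => i ∈ F) ⊆
          insert F₀ ((A.erase F₀).filter (fun F => i ∈ F)) := by
        intro F hF
        rw [Finset.mem_filter] at hF
        by_cases hFF₀ : F = F₀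
        · exact hFF₀ ▸ Finset.mem_insert_self _ _
        · apply Finset.mem_insert_of_mem
          rw [Finset.mem_filter]
          exact ⟨Finset.mem_erase.mpr ⟨hFF₀, hF.1⟩, hF.2⟩
      have hcard := (Finset.card_le_card hsub).trans (Finset.card_insert_le _ _)
      have : (A.filter (fun F => i ∈ F)).card
          ≤ ((A.erase F₀).filter (fun F => i ∈ F)).card + 1 := hcard
      have hcast : ((A.filter (fun F => i ∈ F)).card : ℤ)
          ≤ (((A.erase F₀).filter (fun F => i ∈ F)).card : ℤ) + 1 := by
        exact_mod_cast this
      omega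
  -- now b + 2 ≤ |A|
  push_neg at hlast
  have h4A : 4 ≤ A.card := by
    have : (4:ℤ) ≤ (A.card : ℤ) := by omega
    exact_mod_cast this
  have hmiss : ∀ i : Fin 4, ∃ F ∈ A, i ∉ F := by
    intro i
    by_contra hcon
    push_neg at hcon
    have := antichain_through i A hanti hcon
    omega
  have hDuniv : D = Finset.univ := by
    by_contra hne
    have hDcard : D.card ≤ 3 := by
      have h1 : D ⊂ Finset.univ := Finset.ssubset_univ_iff.mpr hne
      have h2 := Finset.card_lt_card h1
      rw [Finset.card_univ] at h2
      simp only [Fintype.card_fin] at h2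
      omega
    have hE2 : ∀ E ∈ A, E.card = 2 := by
      intro E hE
      have hEsubD : E ⊆ D := hPsubD E (hAP hE)
      have hEneD : E ≠ D := hPneD E (hAP hE)
      have hElt : E.card < D.card :=
        Finset.card_lt_card (Finset.ssubset_iff_subset_ne.mpr ⟨hEsubD, hEneD⟩)
      have hEpos : 1 ≤ E.card := Finset.card_pos.mpr (hAnonempty E hE)
      have hE1 : E.card ≠ 1 := by
        intro h1
        obtain ⟨j, hj⟩ := Finset.card_eq_one.mp h1
        have hjD : j ∈ D := hEsubD (hj ▸ Finset.mem_singleton_self j)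
        exact hsingleton_not j hjD (hj ▸ hE)
      omega
    have hsubP2 : A ⊆ D.powersetCard 2 := by
      intro E hE
      rw [Finset.mem_powersetCard]
      exact ⟨hPsubD E (hAP hE), hE2 E hE⟩
    have hcard := Finset.card_le_card hsubP2
    rw [Finset.card_powersetCard] at hcard
    have h3 : Nat.choose D.card 2 ≤ Nat.choose 3 2 := Nat.choose_le_choose 2 hDcard
    have h4 : Nat.choose 3 2 = 3 := by decide
    omega
  have hm1u : ∀ i : Fin 4, 1 ≤ m i := by
    intro i
    exact hm1 i (hDuniv ▸ Finset.mem_univ i)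
  have hmbu : ∀ i : Fin 4, m i ≤ b - 1 := by
    intro i
    exact hmb i (hDuniv ▸ Finset.mem_univ i) (hmiss i)
  by_cases htrip : ∃ E ∈ A, E.card = 3
  · -- a triple exists: then b = 2 and two sets cover everything
    obtain ⟨E, hEA, hE3⟩ := htrip
    have hcompl : (Finset.univ \ E).card = 1 := by
      rw [Finset.card_sdiff_of_subset (Finset.subset_univ E)]
      rw [Finset.card_univ]
      simp [hE3]
    obtain ⟨d, hd⟩ := Finset.card_eq_one.mp hcompl
    have hdE : d ∉ E := by
      have : d ∈ Finset.univ \ E := hd ▸ Finset.mem_singleton_self d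
      exact (Finset.mem_sdiff.mp this).2
    have hothers : ∀ F ∈ A, F ≠ E → d ∈ F := by
      intro F hF hne
      by_contra hdF
      have hFE : F ⊆ E := by
        intro j hj
        by_contra hjE
        have hjs : j ∈ Finset.univ \ E := Finset.mem_sdiff.mpr ⟨Finset.mem_univ j, hjE⟩
        rw [hd, Finset.mem_singleton] at hjs
        exact hdF (hjs ▸ hj)
      exact hanti F hF E hEA hne hFE
    have hA4 : A.card ≤ 4 := by
      have herase : ∀ F ∈ A.erase E, d ∈ F := fun F hF =>
        hothers F (Finset.mem_of_mem_erase hF) (Finset.ne_of_mem_erase hF)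
      have hanti' : ∀ E' ∈ A.erase E, ∀ F' ∈ A.erase E, E' ≠ F' → ¬ E' ⊆ F' :=
        fun E' hE' F' hF' =>
          hanti E' (Finset.mem_of_mem_erase hE') F' (Finset.mem_of_mem_erase hF')
      have h3 := antichain_through d (A.erase E) hanti' herase
      have h4 : A.card ≤ (A.erase E).card + 1 := by
        have := Finset.card_erase_of_mem hEA
        omega
      omega
    have hbeq : b = 2 := by omega
    have hmu : ∀ i : Fin 4, m i = 1 := by
      intro i
      have h1 := hmbu i
      have h2 := hm1u i
      omega
    obtain ⟨F, hFf⟩ := hAne_of d (hDuniv ▸ Finset.mem_univ d)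
    rw [Finset.mem_filter] at hFf
    have hFne : F ≠ E := by
      intro h
      exact hdE (h ▸ hFf.2)
    apply main (insert E {F})
    · intro G hG
      rw [Finset.mem_insert] at hG
      rcases hG with rfl | hG
      · exact hEA
      · rw [Finset.mem_singleton] at hG
        exact hG ▸ hFf.1
    · have h1 : (insert E ({F} : Finset (Finset (Fin 4)))).card ≤ 2 := by
        apply le_trans (Finset.card_insert_le _ _)
        simp
      have h2 : ((insert E ({F} : Finset (Finset (Fin 4)))).card : ℤ) ≤ 2 := by
        exact_mod_cast h1
      omega
    · intro i hi
      rw [hmdef] at hmu ⊢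
      rw [hmu i]
      by_cases hiE : i ∈ E
      · have : E ∈ (insert E ({F} : Finset (Finset (Fin 4)))).filter (fun G => i ∈ G) := by
          rw [Finset.mem_filter]
          exact ⟨Finset.mem_insert_self E {F}, hiE⟩
        have := Finset.card_pos.mpr ⟨E, this⟩
        omega
      · have hid : i = d := by
          have : i ∈ Finset.univ \ E := Finset.mem_sdiff.mpr ⟨Finset.mem_univ i, hiE⟩
          rw [hd, Finset.mem_singleton] at this
          exact this
        have : F ∈ (insert E ({F} : Finset (Finset (Fin 4)))).filter (fun G => i ∈ G) := by
          rw [Finset.mem_filter]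
          exact ⟨Finset.mem_insert_of_mem (Finset.mem_singleton_self F), hid ▸ hFf.2⟩
        have := Finset.card_pos.mpr ⟨F, this⟩
        omega
  -- no triples: all members of A are pairs
  push_neg at htrip
  have hE2 : ∀ E ∈ A, E.card = 2 := by
    intro E hE
    have hEsub : E ⊆ D := hPsubD E (hAP hE)
    have hEne : E ≠ D := hPneD E (hAP hE)
    have hElt : E.card < D.card :=
      Finset.card_lt_card (Finset.ssubset_iff_subset_ne.mpr ⟨hEsub, hEne⟩)
    have hDcard : D.card = 4 := by
      rw [hDuniv, Finset.card_univ]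
      simp
    have hpos : 1 ≤ E.card := Finset.card_pos.mpr (hAnonempty E hE)
    have h1 : E.card ≠ 1 := by
      intro h1
      obtain ⟨j, hj⟩ := Finset.card_eq_one.mp h1
      exact hsingleton_not j (hDuniv ▸ Finset.mem_univ j) (hj ▸ hE)
    have h3 : E.card ≠ 3 := htrip E hE
    omega
  set PAIRS : Finset (Finset (Fin 4)) :=
    (Finset.univ : Finset (Fin 4)).powersetCard 2 with hPAIRSdef
  have hPAIRScard : PAIRS.card = 6 := by
    rw [hPAIRSdef, Finset.card_powersetCard, Finset.card_univ]
    decide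
  have hApairs : A ⊆ PAIRS := by
    intro E hE
    rw [hPAIRSdef, Finset.mem_powersetCard]
    exact ⟨Finset.subset_univ E, hE2 E hE⟩
  have hA6 : A.card ≤ 6 := hPAIRScard ▸ Finset.card_le_card hApairs
  have hb4 : b ≤ 4 := by omega
  have hcomppair : 8 ≤ 2 * A.card → ∃ E ∈ A, ∃ F ∈ A, E ∪ F = Finset.univ := by
    intro h8
    set Ac : Finset (Finset (Fin 4)) := A.image (fun E => Finset.univ \ E) with hAc
    have hinj : Set.InjOn (fun E : Finset (Fin 4) => Finset.univ \ E) A := by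
      intro E _ F _ h
      have h1 : Finset.univ \ (Finset.univ \ E) = Finset.univ \ (Finset.univ \ F) := by
        simp only at h
        rw [h]
      rwa [Finset.sdiff_sdiff_eq_self (Finset.subset_univ E),
        Finset.sdiff_sdiff_eq_self (Finset.subset_univ F)] at h1
    have hAccard : Ac.card = A.card := Finset.card_image_of_injOn hinj
    have hAcP : Ac ⊆ PAIRS := by
      intro G hG
      obtain ⟨E, hE, rfl⟩ := Finset.mem_image.mp hG
      rw [hPAIRSdef, Finset.mem_powersetCard]
      refine ⟨Finset.subset_univ _, ?_⟩
      rw [Finset.card_sdiff_of_subset (Finset.subset_univ E), Finset.card_univ, hE2 E hE]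
      simp
    have hunion : (A ∪ Ac).card ≤ 6 :=
      hPAIRScard ▸ Finset.card_le_card (Finset.union_subset hApairs hAcP)
    have hint := Finset.card_union_add_card_inter A Ac
    have hne : (A ∩ Ac).Nonempty := by
      apply Finset.card_pos.mp
      omega
    obtain ⟨E, hEint⟩ := hne
    rw [Finset.mem_inter] at hEint
    obtain ⟨F, hF, hEF⟩ := Finset.mem_image.mp hEint.2
    refine ⟨E, hEint.1, F, hF, ?_⟩
    rw [← hEF]
    exact Finset.sdiff_union_of_subset (Finset.subset_univ F)
  -- helper for coverage by two covering sets, used for b = 2 and some b = 3 cases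
  have hmain2 : ∀ E ∈ A, ∀ F ∈ A, E ∪ F = Finset.univ → (∀ i : Fin 4, m i = 1) →
      ∃ Ts : Finset (Typ 4), (Ts.card : ℤ) ≤ ⌈∑ R : Typ 4, x R⌉ ∧
        (∀ R ∈ Ts, 0 < x R) ∧
        ∀ i ∈ D, ⌊fracUtil x i⌋ ≤ ((Ts.filter (fun R => i ∈ R.1)).card : ℤ) := by
    intro E hEA F hFA hEFu hmu
    apply main (insert E ({F} : Finset (Finset (Fin 4))))
    · intro G hG
      rw [Finset.mem_insert] at hG
      rcases hG with rfl | hG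
      · exact hEA
      · rw [Finset.mem_singleton] at hG
        exact hG ▸ hFA
    · have h1 : (insert E ({F} : Finset (Finset (Fin 4)))).card ≤ 2 := by
        apply le_trans (Finset.card_insert_le _ _)
        simp
      have h2 : ((insert E ({F} : Finset (Finset (Fin 4)))).card : ℤ) ≤ 2 := by
        exact_mod_cast h1
      omega
    · intro i hi
      rw [hmdef] at hmu ⊢
      rw [hmu i]
      have hiEF : i ∈ E ∪ F := hEFu ▸ Finset.mem_univ i
      rw [Finset.mem_union] at hiEF
      rcases hiEF with hiE | hiF
      · have hmem : E ∈ (insert E ({F} : Finset (Finset (Fin 4)))).filter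
            (fun G => i ∈ G) := by
          rw [Finset.mem_filter]
          exact ⟨Finset.mem_insert_self E {F}, hiE⟩
        have := Finset.card_pos.mpr ⟨E, hmem⟩
        omega
      · have hmem : F ∈ (insert E ({F} : Finset (Finset (Fin 4)))).filter
            (fun G => i ∈ G) := by
          rw [Finset.mem_filter]
          exact ⟨Finset.mem_insert_of_mem (Finset.mem_singleton_self F), hiF⟩
        have := Finset.card_pos.mpr ⟨F, hmem⟩
        omega
  have hb234 : b = 2 ∨ b = 3 ∨ b = 4 := by omega
  rcases hb234 with hbeq | hbeq | hbeq
  · -- b = 2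
    have hmu : ∀ i : Fin 4, m i = 1 := by
      intro i
      have h1 := hmbu i
      have h2 := hm1u i
      omega
    obtain ⟨E, hEA, F, hFA, hEF⟩ := hcomppair (by omega)
    exact hmain2 E hEA F hFA hEF hmu
  · -- b = 3
    have hm2 : ∀ i : Fin 4, m i ≤ 2 := by
      intro i
      have := hmbu i
      omega
    have hA5 : 5 ≤ A.card := by
      have : (5:ℤ) ≤ (A.card:ℤ) := by omega
      exact_mod_cast this
    have hsumm : (∑ i : Fin 4, m i) ≤ 6 := by
      have h1 := hNF3 Finset.univ (by rw [hDuniv]) 2 (fun F hF => by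
        rw [Finset.inter_univ]
        rw [hE2 F hF])
      rw [hbeq] at h1
      have h2 : (∑ i ∈ Finset.univ, m i) = ∑ i : Fin 4, m i := rfl
      omega
    set TWO : Finset (Fin 4) := Finset.univ.filter (fun i => m i = 2) with hTWOdef
    have hTWOspec : ∀ i : Fin 4, i ∉ TWO → m i = 1 := by
      intro i hi
      rw [hTWOdef, Finset.mem_filter] at hi
      push_neg at hi
      have h1 := hm1u i
      have h2 := hm2 i
      have h3 := hi (Finset.mem_univ i)
      omega
    have hTWOmem : ∀ i ∈ TWO, m i = 2 := by
      intro i hi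
      rw [hTWOdef, Finset.mem_filter] at hi
      exact hi.2
    have hTWOcard : TWO.card ≤ 2 := by
      have hper : ∀ i ∈ Finset.univ, 1 + (if i ∈ TWO then (1:ℤ) else 0) ≤ m i := by
        intro i _
        by_cases h : i ∈ TWO
        · rw [if_pos h, hTWOmem i h]
          norm_num
        · rw [if_neg h]
          have := hm1u i
          omega
      have hsum2 := Finset.sum_le_sum hper
      have hleft : (∑ i : Fin 4, (1 + (if i ∈ TWO then (1:ℤ) else 0)))
          = 4 + (TWO.card : ℤ) := by
        have hA' : (∑ _i : Fin 4, (1:ℤ)) = 4 := by simp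
        have hB' : (∑ i : Fin 4, (if i ∈ TWO then (1:ℤ) else 0)) = (TWO.card:ℤ) := by
          rw [Finset.sum_ite_mem, Finset.univ_inter, Finset.sum_const,
            nsmul_eq_mul, mul_one]
        rw [Finset.sum_add_distrib, hA', hB']
      rw [hleft] at hsum2
      have : (TWO.card : ℤ) ≤ 2 := by omega
      exact_mod_cast this
    have hallpairs : ∀ d : Fin 4, m d = 2 → ∀ j : Fin 4, j ≠ d →
        ({d, j} : Finset (Fin 4)) ∈ A := by
      intro d hd j hj
      have hdg := hdeg d (hDuniv ▸ Finset.mem_univ d)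
      rw [hd] at hdg
      set Pd : Finset (Finset (Fin 4)) := PAIRS.filter (fun F => d ∈ F) with hPddef
      have hPdcard : Pd.card = 3 := by
        rw [hPddef, hPAIRSdef]
        fin_cases d <;> decide
      have hsub : A.filter (fun F => d ∈ F) ⊆ Pd :=
        Finset.filter_subset_filter _ hApairs
      have hcard3 : 3 ≤ (A.filter (fun F => d ∈ F)).card := by
        have : (3:ℤ) ≤ ((A.filter (fun F => d ∈ F)).card : ℤ) := by omega
        exact_mod_cast this
      have heq : A.filter (fun F => d ∈ F) = Pd :=
        Finset.eq_of_subset_of_card_le hsub (by omega)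
      have hmem : ({d, j} : Finset (Fin 4)) ∈ Pd := by
        rw [hPddef, Finset.mem_filter, hPAIRSdef, Finset.mem_powersetCard]
        refine ⟨⟨Finset.subset_univ _, ?_⟩, Finset.mem_insert_self d {j}⟩
        rw [Finset.card_insert_of_notMem (by simpa using (Ne.symm hj))]
        simp
      have : ({d, j} : Finset (Fin 4)) ∈ A.filter (fun F => d ∈ F) := heq ▸ hmem
      exact (Finset.mem_filter.mp this).1
    have hT012 : TWO.card = 0 ∨ TWO.card = 1 ∨ TWO.card = 2 := by omega
    rcases hT012 with hTc | hTc | hTc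
    · -- no voter demands 2
      have hTWOempty : TWO = ∅ := Finset.card_eq_zero.mp hTc
      have hmu : ∀ i : Fin 4, m i = 1 := by
        intro i
        apply hTWOspec
        rw [hTWOempty]
        exact Finset.notMem_empty i
      obtain ⟨E, hEA, F, hFA, hEF⟩ := hcomppair (by omega)
      exact hmain2 E hEA F hFA hEF hmu
    · -- exactly one voter demands 2
      obtain ⟨d, hd⟩ := Finset.card_eq_one.mp hTc
      have hmd : m d = 2 := hTWOmem d (hd ▸ Finset.mem_singleton_self d)
      apply main (A.filter (fun F => d ∈ F)) (Finset.filter_subset _ _)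
      · have hsub : A.filter (fun F => d ∈ F) ⊆ PAIRS.filter (fun F => d ∈ F) :=
          Finset.filter_subset_filter _ hApairs
        have hPdcard : (PAIRS.filter (fun F => d ∈ F)).card = 3 := by
          rw [hPAIRSdef]
          fin_cases d <;> decide
        have h1 : (A.filter (fun F => d ∈ F)).card ≤ 3 :=
          hPdcard ▸ Finset.card_le_card hsub
        have : ((A.filter (fun F => d ∈ F)).card : ℤ) ≤ 3 := by exact_mod_cast h1
        omega
      · intro i hi
        by_cases hid : i = d
        · subst hid
          have heq2 : (A.filter (fun F => i ∈ F)).filter (fun F => i ∈ F)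
              = A.filter (fun F => i ∈ F) := by
            apply Finset.filter_true_of_mem
            intro F hF
            exact (Finset.mem_filter.mp hF).2
          rw [heq2]
          have hdg := hdeg i (hDuniv ▸ Finset.mem_univ i)
          omega
        · have hmi : m i = 1 := by
            apply hTWOspec
            rw [hd, Finset.mem_singleton]
            exact hid
          have hpair : ({d, i} : Finset (Fin 4)) ∈ A := hallpairs d hmd i hid
          have hmem : ({d, i} : Finset (Fin 4)) ∈
              (A.filter (fun F => d ∈ F)).filter (fun F => i ∈ F) := by
            rw [Finset.mem_filter, Finset.mem_filter]
            exact ⟨⟨hpair, Finset.mem_insert_self d {i}⟩,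
              Finset.mem_insert_of_mem (Finset.mem_singleton_self i)⟩
          have := Finset.card_pos.mpr ⟨_, hmem⟩
          rw [hmi]
          omega
    · -- exactly two voters demand 2
      obtain ⟨c, d, hcd, hTWOeq⟩ := Finset.card_eq_two.mp hTc
      have hmc : m c = 2 := hTWOmem c (hTWOeq ▸ Finset.mem_insert_self c {d})
      have hmd : m d = 2 := hTWOmem d
        (hTWOeq ▸ Finset.mem_insert_of_mem (Finset.mem_singleton_self d))
      have hrest : (Finset.univ \ ({c, d} : Finset (Fin 4))).card = 2 := by
        rw [Finset.card_sdiff_of_subset (Finset.subset_univ _), Finset.card_univ]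
        rw [Finset.card_insert_of_notMem (by simpa using hcd)]
        simp
      obtain ⟨p, q, hpq, hpqeq⟩ := Finset.card_eq_two.mp hrest
      have hpmem : p ∉ ({c, d} : Finset (Fin 4)) := by
        have : p ∈ Finset.univ \ ({c, d} : Finset (Fin 4)) :=
          hpqeq ▸ Finset.mem_insert_self p {q}
        exact (Finset.mem_sdiff.mp this).2
      have hqmem : q ∉ ({c, d} : Finset (Fin 4)) := by
        have : q ∈ Finset.univ \ ({c, d} : Finset (Fin 4)) :=
          hpqeq ▸ Finset.mem_insert_of_mem (Finset.mem_singleton_self q)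
        exact (Finset.mem_sdiff.mp this).2
      have hpc : p ≠ c := by
        intro h
        apply hpmem
        rw [h]
        exact Finset.mem_insert_self c {d}
      have hpd : p ≠ d := by
        intro h
        apply hpmem
        rw [h]
        exact Finset.mem_insert_of_mem (Finset.mem_singleton_self d)
      have hqc : q ≠ c := by
        intro h
        apply hqmem
        rw [h]
        exact Finset.mem_insert_self c {d}
      have hqd : q ≠ d := by
        intro h
        apply hqmem
        rw [h]
        exact Finset.mem_insert_of_mem (Finset.mem_singleton_self d)
      set TA : Finset (Finset (Fin 4)) :=
        insert ({c, d} : Finset (Fin 4))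
          (insert ({c, p} : Finset (Fin 4)) ({({d, q} : Finset (Fin 4))} :
            Finset (Finset (Fin 4)))) with hTAdef
      have hcdA : ({c, d} : Finset (Fin 4)) ∈ A := hallpairs c hmc d (Ne.symm hcd)
      have hcpA : ({c, p} : Finset (Fin 4)) ∈ A := hallpairs c hmc p hpc
      have hdqA : ({d, q} : Finset (Fin 4)) ∈ A := hallpairs d hmd q hqd
      apply main TA
      · intro G hG
        rw [hTAdef] at hG
        rw [Finset.mem_insert, Finset.mem_insert, Finset.mem_singleton] at hG
        rcases hG with rfl | rfl | rfl
        · exact hcdA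
        · exact hcpA
        · exact hdqA
      · have h1 : TA.card ≤ 3 := by
          rw [hTAdef]
          apply le_trans (Finset.card_insert_le _ _)
          have := Finset.card_insert_le ({c, p} : Finset (Fin 4))
            ({({d, q} : Finset (Fin 4))} : Finset (Finset (Fin 4)))
          simp only [Finset.card_singleton] at this
          omega
        have : (TA.card : ℤ) ≤ 3 := by exact_mod_cast h1
        omega
      · intro i hi
        have hiuniv : i = c ∨ i = d ∨ i = p ∨ i = q := by
          by_cases h1 : i ∈ ({c, d} : Finset (Fin 4))
          · rw [Finset.mem_insert, Finset.mem_singleton] at h1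
            tauto
          · have : i ∈ Finset.univ \ ({c, d} : Finset (Fin 4)) :=
              Finset.mem_sdiff.mpr ⟨Finset.mem_univ i, h1⟩
            rw [hpqeq, Finset.mem_insert, Finset.mem_singleton] at this
            tauto
        have htwomem' : ∀ (j : Fin 4), i = j → ∀ G₁ G₂ : Finset (Fin 4),
            G₁ ∈ TA.filter (fun G => j ∈ G) →
            G₂ ∈ TA.filter (fun G => j ∈ G) → G₁ ≠ G₂ →
            (2:ℤ) ≤ ((TA.filter (fun G => j ∈ G)).card : ℤ) := by
          intro j _ G₁ G₂ h1 h2 hne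
          have := Finset.one_lt_card.mpr ⟨G₁, h1, G₂, h2, hne⟩
          omega
        have honemem' : ∀ (j : Fin 4), i = j → ∀ G : Finset (Fin 4),
            G ∈ TA.filter (fun G => j ∈ G) →
            (1:ℤ) ≤ ((TA.filter (fun G => j ∈ G)).card : ℤ) := by
          intro j _ G h1
          have := Finset.card_pos.mpr ⟨G, h1⟩
          omega
        have hmemTA1 : ({c, d} : Finset (Fin 4)) ∈ TA := by
          rw [hTAdef]; exact Finset.mem_insert_self _ _
        have hmemTA2 : ({c, p} : Finset (Fin 4)) ∈ TA := by
          rw [hTAdef]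
          exact Finset.mem_insert_of_mem (Finset.mem_insert_self _ _)
        have hmemTA3 : ({d, q} : Finset (Fin 4)) ∈ TA := by
          rw [hTAdef]
          exact Finset.mem_insert_of_mem
            (Finset.mem_insert_of_mem (Finset.mem_singleton_self _))
        rcases hiuniv with heq | heq | heq | heq
        · rw [heq, hmc]
          refine htwomem' c heq ({c, d} : Finset (Fin 4)) ({c, p} : Finset (Fin 4)) ?_ ?_ ?_
          · rw [Finset.mem_filter]
            exact ⟨hmemTA1, Finset.mem_insert_self _ _⟩
          · rw [Finset.mem_filter]
            exact ⟨hmemTA2, Finset.mem_insert_self _ _⟩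
          · intro h
            have hdm : d ∈ ({c, p} : Finset (Fin 4)) := by
              rw [← h]
              exact Finset.mem_insert_of_mem (Finset.mem_singleton_self d)
            rw [Finset.mem_insert, Finset.mem_singleton] at hdm
            rcases hdm with h2 | h2
            · exact hcd h2.symm
            · exact hpd h2.symm
        · rw [heq, hmd]
          refine htwomem' d heq ({c, d} : Finset (Fin 4)) ({d, q} : Finset (Fin 4)) ?_ ?_ ?_
          · rw [Finset.mem_filter]
            exact ⟨hmemTA1, Finset.mem_insert_of_mem (Finset.mem_singleton_self d)⟩
          · rw [Finset.mem_filter]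
            exact ⟨hmemTA3, Finset.mem_insert_self _ _⟩
          · intro h
            have hcm : c ∈ ({d, q} : Finset (Fin 4)) := by
              rw [← h]
              exact Finset.mem_insert_self c {d}
            rw [Finset.mem_insert, Finset.mem_singleton] at hcm
            rcases hcm with h2 | h2
            · exact hcd h2
            · exact hqc h2.symm
        · have hmi : m p = 1 := by
            apply hTWOspec p
            rw [hTWOeq, Finset.mem_insert, Finset.mem_singleton]
            push_neg
            exact ⟨hpc, hpd⟩
          rw [heq, hmi]
          apply honemem' p heq ({c, p} : Finset (Fin 4))
          rw [Finset.mem_filter]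
          exact ⟨hmemTA2, Finset.mem_insert_of_mem (Finset.mem_singleton_self p)⟩
        · have hmi : m q = 1 := by
            apply hTWOspec q
            rw [hTWOeq, Finset.mem_insert, Finset.mem_singleton]
            push_neg
            exact ⟨hqc, hqd⟩
          rw [heq, hmi]
          apply honemem' q heq ({d, q} : Finset (Fin 4))
          rw [Finset.mem_filter]
          exact ⟨hmemTA3, Finset.mem_insert_of_mem (Finset.mem_singleton_self q)⟩
  · -- b = 4 : all six pairs present
    have hAeq : A = PAIRS := by
      apply Finset.eq_of_subset_of_card_le hApairs
      have : (6:ℤ) ≤ (A.card:ℤ) := by omega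
      have h6 : 6 ≤ A.card := by exact_mod_cast this
      omega
    have hm2 : ∀ i : Fin 4, m i ≤ 2 := by
      intro i
      have hdg := hdeg i (hDuniv ▸ Finset.mem_univ i)
      have h3 : (A.filter (fun F => i ∈ F)).card = 3 := by
        rw [hAeq, hPAIRSdef]
        fin_cases i <;> decide
      rw [h3] at hdg
      omega
    set TA : Finset (Finset (Fin 4)) :=
      {({0, 1} : Finset (Fin 4)), ({2, 3} : Finset (Fin 4)),
        ({0, 2} : Finset (Fin 4)), ({1, 3} : Finset (Fin 4))} with hTAdef
    apply main TA
    · rw [hAeq, hPAIRSdef, hTAdef]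
      decide
    · have h1 : TA.card ≤ 4 := by
        rw [hTAdef]
        decide
      have : (TA.card : ℤ) ≤ 4 := by exact_mod_cast h1
      omega
    · intro i hi
      have h2 : (TA.filter (fun F => i ∈ F)).card = 2 := by
        rw [hTAdef]
        fin_cases i <;> decide
      rw [h2]
      have := hm2 i
      omega

lemma RT_trivial (x : Typ 4 → ℝ) (hx : ∀ R, 0 ≤ x R)
    (h : ∀ i, ⌊fracUtil x i⌋ ≤ 0) :
    ∃ y : Typ 4 → ℕ, (∀ R, (y R : ℤ) ≤ ⌈x R⌉) ∧
      ((∑ R : Typ 4, (y R : ℤ)) ≤ ⌈∑ R : Typ 4, x R⌉) ∧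
      (∀ i, ⌊fracUtil x i⌋ ≤ intUtil y i) := by
  refine ⟨fun _ => 0, ?_, ?_, ?_⟩
  · intro R
    simpa using Int.ceil_nonneg (hx R)
  · simpa using Int.ceil_nonneg (Finset.sum_nonneg (fun R _ => hx R))
  · intro i
    calc ⌊fracUtil x i⌋ ≤ 0 := h i
    _ ≤ intUtil (fun _ => 0) i := intUtil_nonneg _ i

theorem RTaux (n : ℕ) : ∀ x : Typ 4 → ℝ, (∀ R, 0 ≤ x R) →
    (⌈∑ R : Typ 4, x R⌉.toNat ≤ n) →
    ∃ y : Typ 4 → ℕ, (∀ R, (y R : ℤ) ≤ ⌈x R⌉) ∧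
      ((∑ R : Typ 4, (y R : ℤ)) ≤ ⌈∑ R : Typ 4, x R⌉) ∧
      (∀ i, ⌊fracUtil x i⌋ ≤ intUtil y i) := by
  induction n with
  | zero =>
    intro x hx hn
    apply RT_trivial x hx
    intro i
    have h1 : fracUtil x i ≤ ∑ R : Typ 4, x R := fracUtil_le_tot hx i
    have h2 : (∑ R : Typ 4, x R) ≤ 0 := by
      have := Int.le_ceil (∑ R : Typ 4, x R)
      have h3 : ⌈∑ R : Typ 4, x R⌉ ≤ 0 := by omega
      calc (∑ R : Typ 4, x R) ≤ (⌈∑ R : Typ 4, x R⌉ : ℝ) := Int.le_ceil _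
      _ ≤ 0 := by exact_mod_cast h3
    calc ⌊fracUtil x i⌋ ≤ ⌊(0:ℝ)⌋ := Int.floor_mono (h1.trans h2)
    _ = 0 := Int.floor_zero
  | succ n ih =>
    intro x hx hn
    by_cases htriv : ∀ i, ⌊fracUtil x i⌋ ≤ 0
    · exact RT_trivial x hx htriv
    -- some voter demands at least 1
    push_neg at htriv
    obtain ⟨i₀, hi₀⟩ := htriv
    have hi₀' : 1 ≤ ⌊fracUtil x i₀⌋ := by omega
    have hcovi₀ : (1:ℝ) ≤ fracUtil x i₀ := by
      calc (1:ℝ) = ((1:ℤ):ℝ) := by norm_num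
      _ ≤ (⌊fracUtil x i₀⌋ : ℝ) := by exact_mod_cast hi₀'
      _ ≤ fracUtil x i₀ := Int.floor_le _
    have htot1 : (1:ℝ) ≤ ∑ R : Typ 4, x R := hcovi₀.trans (fracUtil_le_tot hx i₀)
    have hb1 : 1 ≤ ⌈∑ R : Typ 4, x R⌉ := by
      have := Int.le_ceil (∑ R : Typ 4, x R)
      by_contra hcon
      push_neg at hcon
      have : ⌈∑ R : Typ 4, x R⌉ ≤ 0 := by omega
      have : ((⌈∑ R : Typ 4, x R⌉ : ℤ) : ℝ) ≤ 0 := by exact_mod_cast this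
      nlinarith [Int.le_ceil (∑ R : Typ 4, x R)]
    by_cases hpeel : ∃ R₀ : Typ 4, 1 ≤ x R₀
    · -- peel off a full unit
      obtain ⟨R₀, hR₀⟩ := hpeel
      set x' : Typ 4 → ℝ := fun R => x R - (if R = R₀ then 1 else 0) with hx'def
      have hx'0 : ∀ R, 0 ≤ x' R := by
        intro R
        simp only [hx'def]
        split
        · next h => subst h; linarith
        · simpa using hx R
      have hsum' : (∑ R : Typ 4, x' R) = (∑ R : Typ 4, x R) - 1 := by
        simp only [hx'def]
        rw [Finset.sum_sub_distrib]
        congr 1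
        rw [Finset.sum_ite_eq' Finset.univ R₀ (fun _ => (1:ℝ))]
        simp
      have hceil' : ⌈∑ R : Typ 4, x' R⌉ = ⌈∑ R : Typ 4, x R⌉ - 1 := by
        rw [hsum']
        exact_mod_cast Int.ceil_sub_one _
      obtain ⟨y', hy'c, hy's, hy'cov⟩ := ih x' hx'0 (by omega)
      refine ⟨fun R => y' R + (if R = R₀ then 1 else 0), ?_, ?_, ?_⟩
      · intro R
        by_cases h : R = R₀
        · subst h
          have h1 : (y' R : ℤ) ≤ ⌈x' R⌉ := hy'c R
          have h2 : ⌈x' R⌉ = ⌈x R⌉ - 1 := by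
            have h3 : x' R = x R - 1 := by simp [hx'def]
            rw [h3]
            exact_mod_cast Int.ceil_sub_one (x R)
          simp only [if_pos rfl]
          push_cast
          omega
        · have h1 : (y' R : ℤ) ≤ ⌈x' R⌉ := hy'c R
          have h2 : x' R = x R := by simp [hx'def, h]
          simp only [if_neg h]
          rw [h2] at h1
          simpa using h1
      · push_cast
        rw [Finset.sum_add_distrib]
        have h1 : (∑ R : Typ 4, (if R = R₀ then (1:ℤ) else 0)) = 1 := by
          rw [Finset.sum_ite_eq' Finset.univ R₀ (fun _ => (1:ℤ))]
          simp
        rw [h1]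
        have h2 := hy's
        push_cast at h2
        omega
      · intro i
        have hcov' : fracUtil x' i = fracUtil x i - (if i ∈ R₀.1 then 1 else 0) := by
          rw [hx'def]
          rw [fracUtil_sub x (fun R => if R = R₀ then 1 else 0) i]
          rw [fracUtil_single]
        rw [intUtil_add_single]
        by_cases h : i ∈ R₀.1
        · have h3 : fracUtil x' i = fracUtil x i - ((1:ℤ):ℝ) := by
            rw [hcov', if_pos h]; norm_num
          have h4 : ⌊fracUtil x' i⌋ = ⌊fracUtil x i⌋ - 1 := by
            rw [h3, Int.floor_sub_intCast]
          have := hy'cov i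
          rw [h4] at this
          simp only [if_pos h]
          omega
        · have h3 : fracUtil x' i = fracUtil x i := by
            rw [hcov', if_neg h]; ring
          have := hy'cov i
          rw [h3] at this
          simp only [if_neg h]
          omega
    · -- all coordinates below 1
      push_neg at hpeel
      set D : Finset (Fin 4) := Finset.univ.filter (fun i => 1 ≤ ⌊fracUtil x i⌋) with hDdef
      have hDne : D.Nonempty := ⟨i₀, by simp [hDdef, hi₀']⟩
      by_cases hshave : ∃ R₀ : Typ 4, 0 < x R₀ ∧
          (∑ R : Typ 4, x R) - (⌈∑ R : Typ 4, x R⌉ - 1 : ℤ) ≤ Wm x D (R₀.1 ∩ D)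
      · -- shave case
        obtain ⟨R₀, hR₀pos, hW⟩ := hshave
        have hb1' : (1:ℝ) ≤ (⌈∑ R : Typ 4, x R⌉ : ℝ) := by exact_mod_cast hb1
        set E : Finset (Fin 4) := R₀.1 ∩ D with hEdef
        set F : Finset (Typ 4) :=
          Finset.univ.filter (fun R : Typ 4 => R.1 ∩ D ⊆ E) with hFdef
        have hR₀F : R₀ ∈ F := by simp [hFdef, hEdef]
        have hWF : Wm x D E = ∑ R ∈ F, x R := rfl
        have hGsplit : x R₀ + ∑ R ∈ F.erase R₀, x R = ∑ R ∈ F, x R :=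
          Finset.add_sum_erase F x hR₀F
        have hG0 : 0 ≤ (∑ R ∈ F, x R) - x R₀ := by
          have h2 : (0:ℝ) ≤ ∑ R ∈ F.erase R₀, x R :=
            Finset.sum_nonneg fun R _ => hx R
          linarith
        set G : ℝ := (∑ R ∈ F, x R) - x R₀ with hGdef
        set δ : ℝ := (∑ R : Typ 4, x R) - x R₀ - ((⌈∑ R : Typ 4, x R⌉ : ℝ) - 1)
          with hδdef
        set δ' : ℝ := max δ 0 with hδ'def
        have hδG : δ ≤ G := by
          rw [hWF] at hW
          push_cast at hW
          simp only [hδdef, hGdef]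
          linarith
        have hδ'G : δ' ≤ G := max_le hδG hG0
        have hδ'0 : 0 ≤ δ' := le_max_right _ _
        set θ : ℝ := 1 - δ' / G with hθdef
        have hθ1 : θ ≤ 1 := by
          have : 0 ≤ δ' / G := div_nonneg hδ'0 hG0
          simp only [hθdef]; linarith
        have hθ0 : 0 ≤ θ := by
          rcases eq_or_lt_of_le hG0 with hG | hG
        
          · have hδ'z : δ' = 0 := le_antisymm (by rw [← hG] at hδ'G; exact hδ'G) hδ'0
            simp [hθdef, hδ'z]
          · have : δ' / G ≤ 1 := (div_le_one hG).mpr hδ'G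
            simp only [hθdef]; linarith
        have hdiv : δ' / G * G = δ' := by
          rcases eq_or_lt_of_le hG0 with hG | hG
          · have hδ'z : δ' = 0 := le_antisymm (by rw [← hG] at hδ'G; exact hδ'G) hδ'0
            rw [hδ'z, ← hG]
            ring
          · exact div_mul_cancel₀ δ' (ne_of_gt hG)
        set d : Typ 4 → ℝ := fun R =>
          if R = R₀ then x R else if R.1 ∩ D ⊆ E then (1 - θ) * x R else 0 with hddef
        have hd0 : ∀ R, 0 ≤ d R := by
          intro R
          simp only [hddef]
          split
          · exact hx R
          · split
            · have h1 : 0 ≤ 1 - θ := by linarith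
              exact mul_nonneg h1 (hx _)
            · exact le_refl _
        have hdx : ∀ R, d R ≤ x R := by
          intro R
          simp only [hddef]
          split
          · exact le_refl _
          · split
            · nlinarith [hx R]
            · exact hx R
        have herase : (Finset.univ.erase R₀).filter
            (fun R : Typ 4 => R.1 ∩ D ⊆ E) = F.erase R₀ := by
          ext R
          simp [hFdef, Finset.mem_erase, Finset.mem_filter, and_comm]
        have hsumd : (∑ R : Typ 4, d R) = x R₀ + δ' := by
          rw [← Finset.add_sum_erase Finset.univ d (Finset.mem_univ R₀)]
          have h1 : d R₀ = x R₀ := by simp [hddef]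
          have h2 : ∑ R ∈ Finset.univ.erase R₀, d R
              = ∑ R ∈ Finset.univ.erase R₀,
                  (if R.1 ∩ D ⊆ E then (1 - θ) * x R else 0) := by
            apply Finset.sum_congr rfl
            intro R hR
            have hne : R ≠ R₀ := (Finset.mem_erase.mp hR).1
            simp [hddef, hne]
          rw [h1, h2, ← Finset.sum_filter, herase]
          have h3 : ∑ R ∈ F.erase R₀, (1 - θ) * x R
              = (1 - θ) * ∑ R ∈ F.erase R₀, x R := by
            rw [Finset.mul_sum]
          have h4 : (∑ R ∈ F.erase R₀, x R) = G := by
            simp only [hGdef]; linarith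
          rw [h3, h4]
          have h5 : (1 - θ) * G = δ' := by
            simp only [hθdef]
            have : (1 - (1 - δ' / G)) * G = δ' / G * G := by ring
            rw [this, hdiv]
          linarith [h5]
        set x' : Typ 4 → ℝ := fun R => x R - d R with hx'def
        have hx'0 : ∀ R, 0 ≤ x' R := fun R => by
          simp only [hx'def]; linarith [hdx R]
        have hsum' : (∑ R : Typ 4, x' R) = (∑ R : Typ 4, x R) - (x R₀ + δ') := by
          simp only [hx'def]
          rw [Finset.sum_sub_distrib, hsumd]
        have hsumle : (∑ R : Typ 4, x' R) ≤ (⌈∑ R : Typ 4, x R⌉ : ℝ) - 1 := by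
          rw [hsum']
          have : δ ≤ δ' := le_max_left _ _
          simp only [hδdef] at this
          linarith
        have hceil' : ⌈∑ R : Typ 4, x' R⌉ ≤ ⌈∑ R : Typ 4, x R⌉ - 1 := by
          apply Int.ceil_le.mpr
          push_cast
          exact hsumle
        obtain ⟨y', hy'c, hy's, hy'cov⟩ := ih x' hx'0 (by omega)
        have hsumd1 : (∑ R : Typ 4, d R) ≤ 1 := by
          rw [hsumd]
          rcases le_or_gt δ 0 with hδ | hδ
          · have : δ' = 0 := max_eq_right hδ
            rw [this]
            linarith [hpeel R₀]
          · have : δ' = δ := max_eq_left (le_of_lt hδ)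
            rw [this]
            have hle : (∑ R : Typ 4, x R) ≤ (⌈∑ R : Typ 4, x R⌉ : ℝ) := Int.le_ceil _
            simp only [hδdef]
            linarith
        refine ⟨fun R => y' R + (if R = R₀ then 1 else 0), ?_, ?_, ?_⟩
        · intro R
          by_cases h : R = R₀
          · subst h
            have h1 : (y' R : ℤ) ≤ ⌈x' R⌉ := hy'c R
            have h2 : x' R = 0 := by simp [hx'def, hddef]
            rw [h2] at h1
            simp only [Int.ceil_zero] at h1
            have h3 : (0:ℤ) < ⌈x R⌉ := Int.ceil_pos.mpr hR₀pos
            simp only [if_pos rfl]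
            push_cast
            omega
          · have h1 : (y' R : ℤ) ≤ ⌈x' R⌉ := hy'c R
            have h2 : ⌈x' R⌉ ≤ ⌈x R⌉ := Int.ceil_le_ceil (by
              simp only [hx'def]; linarith [hd0 R])
            simp only [if_neg h]
            omega
        · push_cast
          rw [Finset.sum_add_distrib]
          have h1 : (∑ R : Typ 4, (if R = R₀ then (1:ℤ) else 0)) = 1 := by
            rw [Finset.sum_ite_eq' Finset.univ R₀ (fun _ => (1:ℤ))]
            simp
          rw [h1]
          have h2 := hy's
          push_cast at h2
          omega
        · intro i
          rw [intUtil_add_single]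
          have hcovsub : fracUtil x' i = fracUtil x i - fracUtil d i :=
            fracUtil_sub x d i
          by_cases hiD : i ∈ D
          · by_cases hiR : i ∈ R₀.1
            · -- i ∈ E : coverage drops by at most 1
              have hfd : fracUtil d i ≤ 1 :=
                le_trans (fracUtil_le_tot hd0 i) hsumd1
              have hcovge : fracUtil x i - 1 ≤ fracUtil x' i := by
                rw [hcovsub]; linarith
              have hfl : ⌊fracUtil x i⌋ - 1 ≤ ⌊fracUtil x' i⌋ := by
                have : ⌊fracUtil x i - 1⌋ ≤ ⌊fracUtil x' i⌋ := Int.floor_mono hcovge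
                rw [show fracUtil x i - 1 = fracUtil x i - ((1:ℤ):ℝ) by norm_num,
                  Int.floor_sub_intCast] at this
                omega
              have := hy'cov i
              simp only [if_pos hiR]
              omega
            · -- i ∈ D but not in R₀ : coverage unchanged
              have hiE : i ∉ E := by
                simp only [hEdef, Finset.mem_inter]
                tauto
              have hfd : fracUtil d i = 0 := by
                apply Finset.sum_eq_zero
                intro R _
                by_cases hiR' : i ∈ R.1
                · rw [if_pos hiR']
                  simp only [hddef]
                  split
                  · next h => exact absurd (h ▸ hiR') hiR
                  · split
                    · next hsub =>
                        exact absurd (hsub (Finset.mem_inter.mpr ⟨hiR', hiD⟩)) hiE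
                    · rfl
                · rw [if_neg hiR']
              have hceq : fracUtil x' i = fracUtil x i := by
                rw [hcovsub, hfd]; ring
              have := hy'cov i
              rw [hceq] at this
              simp only [if_neg hiR]
              omega
          · -- i ∉ D : trivial
            have hfl : ⌊fracUtil x i⌋ ≤ 0 := by
              by_contra hcon
              push_neg at hcon
              exact hiD (by simp [hDdef]; omega)
            have h1 := intUtil_nonneg y' i
            split <;> omega
      · -- hard case
        push_neg at hshave
        obtain ⟨Ts, hTscard, hTspos, hTscov⟩ :=
          hard_case x hx hpeel D hDdef hDne (fun R₀ h => hshave R₀ h)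
        refine ⟨fun R => if R ∈ Ts then 1 else 0, ?_, ?_, ?_⟩
        · intro R
          by_cases h : R ∈ Ts
          · simp only [if_pos h]
            have : (0:ℝ) < x R := hTspos R h
            have := Int.ceil_pos.mpr this
            omega
          · simp only [if_neg h]
            exact Int.ceil_nonneg (hx R)
        · have heq : (∑ R : Typ 4, ((if R ∈ Ts then (1:ℕ) else 0 : ℕ) : ℤ))
              = (Ts.card : ℤ) := by
            push_cast
            rw [Finset.sum_ite_mem, Finset.univ_inter, Finset.sum_const,
              nsmul_eq_mul, mul_one]
          rw [heq]
          exact hTscard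
        · intro i
          rw [intUtil_indicator]
          by_cases h : i ∈ D
          · exact hTscov i h
          · have : ¬ (1 ≤ ⌊fracUtil x i⌋) := by
              intro hcon
              exact h (by simp [hDdef, hcon])
            have hc : (0:ℤ) ≤ ((Ts.filter (fun R => i ∈ R.1)).card : ℤ) := by positivity
            omega

theorem RT (x : Typ 4 → ℝ) (hx : ∀ R, 0 ≤ x R) :
    ∃ y : Typ 4 → ℕ, (∀ R, (y R : ℤ) ≤ ⌈x R⌉) ∧
      ((∑ R : Typ 4, (y R : ℤ)) ≤ ⌈∑ R : Typ 4, x R⌉) ∧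
      (∀ i, ⌊fracUtil x i⌋ ≤ intUtil y i) := by
  exact RTaux ⌈∑ R : Typ 4, x R⌉.toNat x hx le_rfl

end S12

/-- For `n = 4` voters, every instance `(c, k)` is integralizable. -/
theorem stmt12 (c : Typ 4 → ℕ) (k : ℕ) :
    Integralizable c k := by
  intro u ⟨x, ⟨hx0, hxc, hxk⟩, hu⟩
  obtain ⟨y, hyc, hyk, hycov⟩ := S12.RT x hx0
  refine ⟨y, ⟨?_, ?_⟩, ?_⟩
  · intro R
    have h1 : (y R : ℤ) ≤ ⌈x R⌉ := hyc R
    have h2 : ⌈x R⌉ ≤ (c R : ℤ) := Int.ceil_le.mpr (by exact_mod_cast hxc R)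
    exact_mod_cast h1.trans h2
  · have h2 : ⌈∑ R : Typ 4, x R⌉ ≤ (k : ℤ) := Int.ceil_le.mpr (by exact_mod_cast hxk)
    have h1 := hyk.trans h2
    push_cast at h1
    exact_mod_cast h1
  · intro i
    have h1 : u i ≤ ⌊fracUtil x i⌋ := Int.le_floor.mpr (by exact_mod_cast hu i)
    exact h1.trans (hycov i)
end

section
/- For every supply vector c ∈ Z_{≥0}^{|R|} and every integer utility vector u ∈ Z^n with finite minimum fractional committee size τ_c(u), the value τ_c(u) lies in (1/L_n)·Z, where L_n is the least common multiple of the absolute determinants of all invertible 0/1 square matrices of order at most n. Consequently, if 0 < δ < 1/L_n and τ_c(u) ≤ k' + δ for some integer k', then τ_c(u) ≤ k'. -/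
open Submodule Set Matrix

theorem aux_det01_le (m : ℕ) (B : Matrix (Fin m) (Fin m) ℤ) (h : ∀ i j, B i j = 0 ∨ B i j = 1) :
    B.det.natAbs ≤ m.factorial := by
  have : |B.det| ≤ (m.factorial : ℤ) := by
    rw [Matrix.det_apply]
    calc |∑ σ : Equiv.Perm (Fin m), Equiv.Perm.sign σ • ∏ i, B (σ i) i|
        ≤ ∑ σ : Equiv.Perm (Fin m), |Equiv.Perm.sign σ • ∏ i, B (σ i) i| :=
          Finset.abs_sum_le_sum_abs _ _
      _ ≤ ∑ _σ : Equiv.Perm (Fin m), 1 := by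
          apply Finset.sum_le_sum
          intro σ _
          rw [Units.smul_def, zsmul_eq_mul, abs_mul, Finset.abs_prod]
          have h2 : ∏ x, |B (σ x) x| ≤ 1 := by
            apply Finset.prod_le_one
            · intro i _; exact abs_nonneg _
            · intro i _; rcases h (σ i) i with h' | h' <;> simp [h']
          simpa [Equiv.Perm.sign_abs] using h2
      _ = m.factorial := by simp [Fintype.card_perm]
  rw [Int.abs_eq_natAbs] at this
  exact_mod_cast this

theorem aux_exists_perp {V : Type*} [Fintype V] [DecidableEq V] (T : Set (V → ℝ)) (x : V → ℝ)
    (hx : x ∉ Submodule.span ℝ T) :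
    ∃ d : V → ℝ, (∀ w ∈ T, ∑ R, w R * d R = 0) ∧ ∑ R, x R * d R ≠ 0 := by
  classical
  set W := Submodule.span ℝ T with hW
  have hπ : W.mkQ x ≠ 0 := by
    intro h
    exact hx ((Submodule.Quotient.mk_eq_zero W).mp h)
  have : ∃ f : Module.Dual ℝ (_ ⧸ W), f (W.mkQ x) ≠ 0 := by
    by_contra hc
    push_neg at hc
    exact hπ ((Module.forall_dual_apply_eq_zero_iff ℝ _).mp hc)
  obtain ⟨f, hf⟩ := this
  set φ : (V → ℝ) →ₗ[ℝ] ℝ := f.comp W.mkQ with hφ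
  have hφT : ∀ w ∈ T, φ w = 0 := by
    intro w hw
    have : W.mkQ w = 0 := (Submodule.Quotient.mk_eq_zero W).mpr (Submodule.subset_span hw)
    simp [hφ, this]
  have hsingle : ∀ y : V → ℝ, y = ∑ R, y R • (Pi.single R (1:ℝ) : V → ℝ) := by
    intro y
    funext R'
    simp [Finset.sum_apply, Pi.single_apply]
  have hrep : ∀ y : V → ℝ, φ y = ∑ R, y R * φ (Pi.single R 1) := by
    intro y
    conv_lhs => rw [hsingle y]
    rw [map_sum]
    congr 1
    funext R
    rw [_root_.map_smul, smul_eq_mul]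
  refine ⟨fun R => φ (Pi.single R 1), ?_, ?_⟩
  · intro w hw
    rw [← hrep w]
    exact hφT w hw
  · rw [← hrep x]
    exact hf

theorem aux_exists_sq_submatrix {κ V : Type*} [Fintype κ] [Fintype V] [DecidableEq κ]
    [DecidableEq V] (v : κ → V → ℝ) (hv : LinearIndependent ℝ v) :
    ∃ g : κ → V, (Matrix.of fun a b => v a (g b)).det ≠ 0 := by
  classical
  set A : Matrix κ V ℝ := Matrix.of v with hA
  have hrank : A.rank = Fintype.card κ := hv.rank_matrix
  have hspan : Submodule.span ℝ (Set.range Aᵀ) = ⊤ := by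
    apply Submodule.eq_top_of_finrank_eq
    change Module.finrank ℝ (Submodule.span ℝ (Set.range A.col)) = _
    rw [← Matrix.rank_eq_finrank_span_cols, hrank, Module.finrank_pi]
  obtain ⟨s, hs_sub, hs_span, hs_ind⟩ := exists_linearIndependent ℝ (Set.range Aᵀ)
  rw [hspan] at hs_span
  have hsfin : s.Finite := Set.Finite.subset (Set.finite_range _) hs_sub
  have : Fintype s := hsfin.fintype
  let b : Module.Basis s ℝ (κ → ℝ) := Module.Basis.mk hs_ind (by rw [Subtype.range_coe, hs_span])
  have hcard : Fintype.card s = Fintype.card κ := by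
    have := Module.finrank_eq_card_basis b
    rw [Module.finrank_pi] at this
    omega
  obtain ⟨e⟩ := Fintype.card_eq.mp hcard.symm
  have hchoice : ∀ x : s, ∃ R : V, Aᵀ R = (x : κ → ℝ) := fun x => hs_sub x.2
  choose f hf using hchoice
  refine ⟨fun a => f (e a), ?_⟩
  set M : Matrix κ κ ℝ := Matrix.of fun a b'' => v a (f (e b'')) with hM
  have hcols : LinearIndependent ℝ (fun j : κ => Mᵀ j) := by
    have heq : (fun j : κ => Mᵀ j) = (fun j : κ => ((e j : s) : κ → ℝ)) := by
      funext j
      have h2 := hf (e j)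
      funext a
      exact (congrFun h2 a).symm ▸ rfl
    rw [heq]
    exact hs_ind.comp e e.injective
  have hU := Matrix.linearIndependent_cols_iff_isUnit.mp hcols
  intro hdet
  have := (Matrix.isUnit_iff_isUnit_det M).mp hU
  rw [hdet] at this
  exact not_isUnit_zero this

/-- The set of absolute determinants of invertible 0/1 square matrices of order
at most `n`. -/
def DetVals (n : ℕ) : Set ℕ :=
  {d | ∃ m : ℕ, m ≤ n ∧ ∃ B : Matrix (Fin m) (Fin m) ℤ,
        (∀ i j, B i j = 0 ∨ B i j = 1) ∧ B.det ≠ 0 ∧ d = B.det.natAbs}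

/-- `L` is the least common multiple of the set `s` of naturals. -/
def IsLcmOf (s : Set ℕ) (L : ℕ) : Prop :=
  (∀ d ∈ s, d ∣ L) ∧ ∀ L' : ℕ, (∀ d ∈ s, d ∣ L') → L ∣ L'

theorem aux_detvals_mem (n : ℕ) : ∀ m (B : Matrix (Fin m) (Fin m) ℤ),
    (∀ i j, B i j = 0 ∨ B i j = 1) → B.det ≠ 0 →
    ∀ U : Finset (Fin m), (∀ i ∈ U, ∀ j j', B i j ≠ 0 → B i j' ≠ 0 → j = j') →
    m ≤ n + U.card → B.det.natAbs ∈ DetVals n := by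
  intro m
  induction m with
  | zero => intro B h01 hdet U hU hcard; exact ⟨0, Nat.zero_le n, B, h01, hdet, rfl⟩
  | succ m ih =>
    intro B h01 hdet U hU hcard
    by_cases hmn : m + 1 ≤ n
    · exact ⟨m + 1, hmn, B, h01, hdet, rfl⟩
    have hUne : U.Nonempty := by
      rcases Finset.eq_empty_or_nonempty U with h | h
      · exfalso; rw [h] at hcard; simp at hcard; omega
      · exact h
    obtain ⟨i₀, hi₀⟩ := hUne
    have hrow : ∃ j₀, B i₀ j₀ ≠ 0 := by
      by_contra hc
      push_neg at hc
      exact hdet (Matrix.det_eq_zero_of_row_eq_zero i₀ hc)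
    obtain ⟨j₀, hj₀⟩ := hrow
    have huniq : ∀ j, B i₀ j ≠ 0 → j = j₀ := fun j hj => hU i₀ hi₀ j j₀ hj hj₀
    have hone : B i₀ j₀ = 1 := (h01 i₀ j₀).resolve_left hj₀
    have hdet_exp : B.det = (-1 : ℤ) ^ ((i₀ : ℕ) + (j₀ : ℕ)) *
        (B.submatrix i₀.succAbove j₀.succAbove).det := by
      rw [Matrix.det_succ_row B i₀]
      rw [Finset.sum_eq_single j₀]
      · rw [hone, mul_one]
      · intro j _ hj
        have : B i₀ j = 0 := by
          by_contra hc; exact hj (huniq j hc)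
        rw [this]; ring
      · intro hj; exact absurd (Finset.mem_univ j₀) hj
    set B' := B.submatrix i₀.succAbove j₀.succAbove with hB'
    have hdet' : B'.det ≠ 0 := by
      intro hc; rw [hdet_exp, hc, mul_zero] at hdet; exact hdet rfl
    have hnatAbs : B.det.natAbs = B'.det.natAbs := by
      rw [hdet_exp, Int.natAbs_mul]
      rcases neg_one_pow_eq_or ℤ ((i₀ : ℕ) + (j₀ : ℕ)) with h | h <;> rw [h] <;> simp
    rw [hnatAbs]
    set U' : Finset (Fin m) := Finset.univ.filter (fun i => i₀.succAbove i ∈ U) with hU'def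
    apply ih B' (fun i j => h01 _ _) hdet' U'
    · intro i hi j j' hj hj'
      have hmem : i₀.succAbove i ∈ U := by
        rw [hU'def] at hi; simpa using hi
      have := hU _ hmem _ _ hj hj'
      exact j₀.succAbove_right_injective this
    · have hsub : U ⊆ insert i₀ (U'.image i₀.succAbove) := by
        intro x hx
        by_cases hxi : x = i₀
        · simp [hxi]
        · obtain ⟨y, hy⟩ := Fin.exists_succAbove_eq hxi
          apply Finset.mem_insert_of_mem
          apply Finset.mem_image.mpr
          exact ⟨y, by simp [hU'def, hy, hx], hy⟩
      have := Finset.card_le_card hsub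
      have h2 := Finset.card_insert_le i₀ (U'.image i₀.succAbove)
      have h3 := Finset.card_image_le (s := U') (f := i₀.succAbove)
      omega

theorem aux_L_ne (n L : ℕ) (hL : IsLcmOf (DetVals n) L) : L ≠ 0 := by
  set N := (Finset.Icc 1 n.factorial).lcm id with hN
  have hNne : N ≠ 0 := by
    rw [hN, Ne, Finset.lcm_eq_zero_iff]
    intro h
    simp only [Set.mem_image, id] at h
    obtain ⟨x, hx, hx0⟩ := h
    rw [Finset.mem_Icc] at hx
    omega
  have hdvd : L ∣ N := by
    apply hL.2
    rintro d ⟨m, hm, B, h01, hdet, rfl⟩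
    apply Finset.dvd_lcm
    rw [Finset.mem_Icc]
    constructor
    · rw [Nat.one_le_iff_ne_zero]
      exact Int.natAbs_ne_zero.mpr hdet
    · exact (aux_det01_le m B h01).trans (Nat.factorial_le hm)
  intro h0
  rw [h0] at hdvd
  exact hNne (Nat.eq_zero_of_zero_dvd hdvd)

/-- The minimum fractional committee size `τ_c(u)` needed to realize an integer
utility vector `u` lies in `(1/L_n)·ℤ`, where `L_n` is the lcm of the absolute
determinants of invertible 0/1 matrices of order at most `n`. Consequently, if
`0 < δ < 1/L_n` and `τ_c(u) ≤ k' + δ` for an integer `k'`, then `τ_c(u) ≤ k'`. -/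
theorem stmt17 (n : ℕ) (c : Typ n → ℕ) (u : Fin n → ℤ) (L : ℕ)
    (hL : IsLcmOf (DetVals n) L) (τ : ℝ)
    (hτ : IsLeast {s : ℝ | ∃ z : Typ n → ℝ,
        (∀ R, 0 ≤ z R) ∧ (∀ R, z R ≤ (c R : ℝ)) ∧
        (∀ i, (u i : ℝ) ≤ fracUtil z i) ∧ s = ∑ R : Typ n, z R} τ) :
    (∃ m : ℤ, τ = (m : ℝ) / (L : ℝ)) ∧
    (∀ (k' : ℤ) (δ : ℝ), 0 < δ → δ < 1 / (L : ℝ) → τ ≤ (k' : ℝ) + δ → τ ≤ (k' : ℝ)) := by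
  classical
  have hLne : L ≠ 0 := aux_L_ne n L hL
  have hLposR : (0:ℝ) < L := Nat.cast_pos.mpr (Nat.pos_of_ne_zero hLne)
  obtain ⟨⟨z, hz0, hzc, hzu, hzsum⟩, hlb⟩ := hτ
  -- row vectors
  set eV : Typ n → (Typ n → ℝ) := fun R R' => if R' = R then 1 else 0 with heV
  set rowv : Fin n → (Typ n → ℝ) := fun i R => if i ∈ R.1 then 1 else 0 with hrowv
  have hfrac : ∀ (y : Typ n → ℝ) (i : Fin n), fracUtil y i = ∑ R, rowv i R * y R := by
    intro y i
    unfold fracUtil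
    congr 1
    funext R
    by_cases h : i ∈ R.1 <;> simp [hrowv, h]
  -- the tight set
  set T : Set (Typ n → ℝ) := {w | (∃ R, w = eV R ∧ (z R = 0 ∨ z R = (c R : ℝ))) ∨
      (∃ i, w = rowv i ∧ fracUtil z i = (u i : ℝ))} with hT
  have hT01 : ∀ w ∈ T, ∀ R, w R = 0 ∨ w R = 1 := by
    rintro w (⟨R₀, rfl, _⟩ | ⟨i₀, rfl, _⟩) R
    · by_cases h : R = R₀ <;> simp [heV, h]
    · by_cases h : i₀ ∈ R.1 <;> simp [hrowv, h]
  have hTval : ∀ w ∈ T, ∃ q : ℤ, ∑ R, w R * z R = (q : ℝ) := by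
    rintro w (⟨R₀, rfl, hR₀⟩ | ⟨i₀, rfl, hi₀⟩)
    · have hsum : ∑ R, eV R₀ R * z R = z R₀ := by
        rw [heV]
        simp [Finset.sum_ite_eq']
      rcases hR₀ with h | h
      · exact ⟨0, by rw [hsum, h]; norm_num⟩
      · exact ⟨(c R₀ : ℤ), by rw [hsum, h]; norm_num⟩
    · refine ⟨u i₀, ?_⟩
      have := hfrac z i₀
      rw [← this, hi₀]
  -- Step: the all-ones vector is in the span of T
  have h1span : (fun _ => (1:ℝ)) ∈ Submodule.span ℝ T := by
    by_contra hns
    obtain ⟨d₀, hdT₀, hd1₀⟩ := aux_exists_perp T (fun _ => 1) hns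
    simp only [one_mul] at hd1₀
    obtain ⟨d, hdT, hdneg⟩ : ∃ d : Typ n → ℝ,
        (∀ w ∈ T, ∑ R, w R * d R = 0) ∧ ∑ R, d R < 0 := by
      rcases hd1₀.lt_or_gt with h | h
      · exact ⟨d₀, hdT₀, h⟩
      · refine ⟨fun R => -(d₀ R), ?_, ?_⟩
        · intro w hw
          have := hdT₀ w hw
          simp only [mul_neg]
          rw [Finset.sum_neg_distrib, this, neg_zero]
        · rw [Finset.sum_neg_distrib]
          linarith
    have hd_lower : ∀ R, z R = 0 → d R = 0 := by
      intro R hR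
      have hmem : eV R ∈ T := Or.inl ⟨R, rfl, Or.inl hR⟩
      have := hdT _ hmem
      rwa [heV, show ∑ R', (if R' = R then (1:ℝ) else 0) * d R' = d R by
        simp [Finset.sum_ite_eq']] at this
    have hd_upper : ∀ R, z R = (c R : ℝ) → d R = 0 := by
      intro R hR
      have hmem : eV R ∈ T := Or.inl ⟨R, rfl, Or.inr hR⟩
      have := hdT _ hmem
      rwa [heV, show ∑ R', (if R' = R then (1:ℝ) else 0) * d R' = d R by
        simp [Finset.sum_ite_eq']] at this
    have hd_util : ∀ i, fracUtil z i = (u i : ℝ) → ∑ R, rowv i R * d R = 0 := by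
      intro i hi
      exact hdT _ (Or.inr ⟨i, rfl, hi⟩)
    -- eventually feasibility
    have hbdd : ∀ᶠ ε in nhdsWithin (0:ℝ) (Set.Ioi 0),
        ∀ R : Typ n, 0 ≤ z R + ε * d R ∧ z R + ε * d R ≤ (c R : ℝ) := by
      rw [Filter.eventually_all]
      intro R
      by_cases h0 : z R = 0
      · have hd0 : d R = 0 := hd_lower R h0
        apply Filter.Eventually.of_forall
        intro ε
        rw [hd0, mul_zero, add_zero]
        exact ⟨hz0 R, hzc R⟩
      · by_cases hc' : z R = (c R : ℝ)
        · have hd0 : d R = 0 := hd_upper R hc'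
          apply Filter.Eventually.of_forall
          intro ε
          rw [hd0, mul_zero, add_zero]
          exact ⟨hz0 R, hzc R⟩
        · have hlt1 : 0 < z R := lt_of_le_of_ne (hz0 R) (Ne.symm h0)
          have hlt2 : z R < (c R : ℝ) := lt_of_le_of_ne (hzc R) hc'
          have htend : Filter.Tendsto (fun ε : ℝ => z R + ε * d R) (nhds 0) (nhds (z R)) := by
            have : Continuous (fun ε : ℝ => z R + ε * d R) :=
              continuous_const.add (continuous_id.mul continuous_const)
            have := this.tendsto 0
            simpa using this
          have := htend.eventually (Ioo_mem_nhds hlt1 hlt2)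
          apply Filter.Eventually.filter_mono nhdsWithin_le_nhds
          filter_upwards [this] with ε hε
          exact ⟨le_of_lt hε.1, le_of_lt hε.2⟩
    have hutl : ∀ᶠ ε in nhdsWithin (0:ℝ) (Set.Ioi 0),
        ∀ i : Fin n, (u i : ℝ) ≤ fracUtil (fun R => z R + ε * d R) i := by
      rw [Filter.eventually_all]
      intro i
      have hexpand : ∀ ε : ℝ, fracUtil (fun R => z R + ε * d R) i =
          fracUtil z i + ε * ∑ R, rowv i R * d R := by
        intro ε
        rw [hfrac, hfrac, Finset.mul_sum]
        rw [← Finset.sum_add_distrib]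
        congr 1
        funext R
        ring
      by_cases htight : fracUtil z i = (u i : ℝ)
      · apply Filter.Eventually.of_forall
        intro ε
        rw [hexpand, hd_util i htight, mul_zero, add_zero, htight]
      · have hstrict : (u i : ℝ) < fracUtil z i := lt_of_le_of_ne (hzu i) (Ne.symm htight)
        have htend : Filter.Tendsto (fun ε : ℝ => fracUtil z i + ε * ∑ R, rowv i R * d R)
            (nhds 0) (nhds (fracUtil z i)) := by
          have : Continuous (fun ε : ℝ => fracUtil z i + ε * ∑ R, rowv i R * d R) :=
            continuous_const.add (continuous_id.mul continuous_const)
          have := this.tendsto 0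
          simpa using this
        have := htend.eventually (Ioi_mem_nhds hstrict)
        apply Filter.Eventually.filter_mono nhdsWithin_le_nhds
        filter_upwards [this] with ε hε
        rw [hexpand]
        exact le_of_lt hε
    have hpos : ∀ᶠ ε in nhdsWithin (0:ℝ) (Set.Ioi 0), (0:ℝ) < ε :=
      eventually_mem_nhdsWithin
    obtain ⟨ε, hεb, hεu, hεp⟩ := (hbdd.and (hutl.and hpos)).exists
    -- contradiction with minimality
    have hmem : (∑ R, (z R + ε * d R)) ∈ {s : ℝ | ∃ z : Typ n → ℝ,
        (∀ R, 0 ≤ z R) ∧ (∀ R, z R ≤ (c R : ℝ)) ∧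
        (∀ i, (u i : ℝ) ≤ fracUtil z i) ∧ s = ∑ R : Typ n, z R} :=
      ⟨fun R => z R + ε * d R, fun R => (hεb R).1, fun R => (hεb R).2, hεu, rfl⟩
    have hge := hlb hmem
    have hsum : ∑ R, (z R + ε * d R) = τ + ε * ∑ R, d R := by
      rw [Finset.sum_add_distrib, ← Finset.mul_sum, hzsum]
    rw [hsum] at hge
    nlinarith
  -- extract an independent subset of the tight rows
  obtain ⟨sT, hs_sub, hs_span, hs_ind⟩ := exists_linearIndependent ℝ T
  have h1s : (fun _ => (1:ℝ)) ∈ Submodule.span ℝ sT := by rw [hs_span]; exact h1span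
  have hsfin : sT.Finite := hs_ind.setFinite
  haveI : Fintype sT := hsfin.fintype
  rw [← Subtype.range_coe (s := sT), mem_span_range_iff_exists_fun] at h1s
  obtain ⟨lam, hlam⟩ := h1s
  obtain ⟨g, hg⟩ := aux_exists_sq_submatrix (fun a : sT => (a : Typ n → ℝ)) hs_ind
  set M : Matrix sT sT ℝ := Matrix.of (fun a b : sT => (a : Typ n → ℝ) (g b)) with hM
  have hgM : M.det ≠ 0 := hg
  set B₀ : Matrix sT sT ℤ :=
    Matrix.of (fun a b : sT => if (a : Typ n → ℝ) (g b) = 1 then 1 else 0) with hB₀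
  have hmapM : M = B₀.map (Int.cast) := by
    funext a b
    rcases hT01 (a : Typ n → ℝ) (hs_sub a.2) (g b) with h | h <;>
      simp [hM, hB₀, Matrix.map_apply, h]
  have hdetM : M.det = ((B₀.det : ℤ) : ℝ) := by
    rw [hmapM]
    exact (RingHom.map_det (Int.castRingHom ℝ) B₀).symm
  have hdetB₀ : B₀.det ≠ 0 := by
    intro h
    apply hgM
    rw [hdetM, h]
    norm_num
  have hginj : Function.Injective g := by
    intro b b' hbb
    by_contra hne
    apply hgM
    apply Matrix.det_zero_of_column_eq hne
    intro a
    simp only [hM, Matrix.of_apply, hbb]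
  -- reindex to Fin m₀
  set m₀ := Fintype.card sT with hm₀
  set eqv : Fin m₀ ≃ sT := (Fintype.equivFin sT).symm with heqv
  set B₁ := B₀.submatrix eqv eqv with hB₁
  have hdetB₁ : B₁.det = B₀.det := Matrix.det_submatrix_equiv_self eqv B₀
  set U : Finset (Fin m₀) :=
    Finset.univ.filter (fun i => ∀ j j', B₁ i j ≠ 0 → B₁ i j' ≠ 0 → j = j') with hUdef
  have hUcard : m₀ ≤ n + U.card := by
    have hψ : ∀ i : {i : Fin m₀ // i ∉ U}, ∃ i₀ : Fin n,
        ((eqv i.1 : sT) : Typ n → ℝ) = rowv i₀ := by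
      rintro ⟨i, hiU⟩
      have hwT := hs_sub (eqv i).2
      rcases hwT with ⟨R₀, hw, _⟩ | ⟨i₀, hw, _⟩
      · exfalso
        apply hiU
        rw [hUdef, Finset.mem_filter]
        refine ⟨Finset.mem_univ _, ?_⟩
        intro j j' hj hj'
        have hBij : ∀ j'', B₁ i j'' ≠ 0 → g (eqv j'') = R₀ := by
          intro j'' hne
          by_contra hneq
          apply hne
          simp [hB₁, hB₀, Matrix.submatrix_apply, hw, heV, hneq]
        have := hginj ((hBij j hj).trans (hBij j' hj').symm)
        exact eqv.injective this
      · exact ⟨i₀, hw⟩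
    choose ψ hψval using hψ
    have hψinj : Function.Injective ψ := by
      rintro ⟨i, hi⟩ ⟨i', hi'⟩ hψeq
      have h1 := hψval ⟨i, hi⟩
      have h2 := hψval ⟨i', hi'⟩
      rw [hψeq, ← h2] at h1
      have : (eqv i : sT) = (eqv i' : sT) := Subtype.ext h1
      have := eqv.injective this
      exact Subtype.ext this
    have hcardle : Fintype.card {i : Fin m₀ // i ∉ U} ≤ n := by
      have := Fintype.card_le_of_injective ψ hψinj
      rwa [Fintype.card_fin] at this
    have hsplit : Fintype.card {i : Fin m₀ // i ∉ U} = m₀ - U.card := by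
      rw [Fintype.card_subtype_compl, Fintype.card_fin, Fintype.card_coe]
    have hUle : U.card ≤ m₀ := by
      have := Finset.card_le_card (Finset.subset_univ U)
      rwa [Finset.card_univ, Fintype.card_fin] at this
    omega
  have hmem : B₀.det.natAbs ∈ DetVals n := by
    rw [← hdetB₁]
    apply aux_detvals_mem n m₀ B₁ ?_ (by rw [hdetB₁]; exact hdetB₀) U ?_ hUcard
    · intro i j
      simp only [hB₁, hB₀, Matrix.submatrix_apply, Matrix.of_apply]
      split <;> simp
    · intro i hi
      rw [hUdef, Finset.mem_filter] at hi
      exact hi.2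
  -- integer tight values
  have hqex : ∀ a : sT, ∃ qa : ℤ, ∑ R, (a : Typ n → ℝ) R * z R = (qa : ℝ) :=
    fun a => hTval _ (hs_sub a.2)
  choose q hqval using hqex
  have hone : ∀ R, ∑ a : sT, lam a * (a : Typ n → ℝ) R = 1 := by
    intro R
    have := congrFun hlam R
    simpa [Finset.sum_apply] using this
  have hτeq : τ = ∑ a : sT, lam a * (q a : ℝ) := by
    rw [hzsum]
    calc ∑ R, z R = ∑ R, (∑ a : sT, lam a * (a : Typ n → ℝ) R) * z R := by
          congr 1; funext R; rw [hone R, one_mul]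
      _ = ∑ R, ∑ a : sT, lam a * ((a : Typ n → ℝ) R * z R) := by
          congr 1; funext R; rw [Finset.sum_mul]; congr 1; funext a; ring
      _ = ∑ a : sT, ∑ R, lam a * ((a : Typ n → ℝ) R * z R) := Finset.sum_comm
      _ = ∑ a : sT, lam a * (q a : ℝ) := by
          congr 1; funext a; rw [← Finset.mul_sum, hqval a]
  -- Cramer's rule
  have hMt : Mᵀ *ᵥ lam = (fun _ => (1:ℝ)) := by
    funext b
    have hlamb := congrFun hlam (g b)
    simp only [Finset.sum_apply, Pi.smul_apply, smul_eq_mul] at hlamb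
    simpa [Matrix.mulVec, dotProduct, hM, mul_comm] using hlamb
  have hcram : M.det • lam = Matrix.cramer Mᵀ (fun _ => (1:ℝ)) := by
    have hinjv : Function.Injective (Mᵀ.mulVec) := by
      rw [Matrix.mulVec_injective_iff_isUnit, Matrix.isUnit_iff_isUnit_det,
        Matrix.det_transpose]
      exact isUnit_iff_ne_zero.mpr hgM
    apply hinjv
    rw [Matrix.mulVec_cramer, Matrix.mulVec_smul, hMt, Matrix.det_transpose]
  have hcramInt : ∀ a : sT, ∃ ca : ℤ,
      Matrix.cramer Mᵀ (fun _ => (1:ℝ)) a = (ca : ℝ) := by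
    intro a
    refine ⟨(B₀ᵀ.updateCol a (fun _ => 1)).det, ?_⟩
    rw [Matrix.cramer_apply]
    have hupd : Mᵀ.updateCol a (fun _ => (1:ℝ)) =
        (B₀ᵀ.updateCol a (fun _ => (1:ℤ))).map (Int.cast) := by
      funext r c'
      simp only [Matrix.updateCol_apply, Matrix.map_apply, Matrix.transpose_apply]
      split
      · norm_num
      · have := congrFun (congrFun hmapM c') r
        simpa [Matrix.map_apply] using this
    rw [hupd]
    exact (RingHom.map_det (Int.castRingHom ℝ) _).symm
  choose cr hcr using hcramInt
  have hdetlam : ∀ a : sT, ((B₀.det : ℤ) : ℝ) * lam a = (cr a : ℝ) := by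
    intro a
    have := congrFun hcram a
    simp only [Pi.smul_apply, smul_eq_mul, hdetM] at this
    rw [this, hcr a]
  set Qt : ℤ := ∑ a : sT, cr a * q a with hQt
  have hkey : ((B₀.det : ℤ) : ℝ) * τ = ((Qt : ℤ) : ℝ) := by
    rw [hτeq, Finset.mul_sum, hQt]
    push_cast [-Int.cast_det]
    congr 1
    funext a
    calc ((B₀.det : ℤ):ℝ) * (lam a * (q a:ℝ))
        = (((B₀.det : ℤ):ℝ) * lam a) * (q a:ℝ) := by ring
      _ = (cr a:ℝ) * (q a:ℝ) := by rw [hdetlam a]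
  -- part 1
  set D := B₀.det with hD
  obtain ⟨e', he'⟩ := hL.1 D.natAbs hmem
  have hsd : D.sign * D = (D.natAbs : ℤ) := by
    rcases lt_trichotomy D 0 with h | h | h
    · rw [Int.sign_eq_neg_one_of_neg h]; omega
    · exact absurd h hdetB₀
    · rw [Int.sign_eq_one_of_pos h]; omega
  have hpart1 : ∃ m : ℤ, τ = (m : ℝ) / (L : ℝ) := by
    refine ⟨Qt * D.sign * e', ?_⟩
    have hintid : (Qt * D.sign * e') * D = Qt * (L : ℤ) := by
      have hLe : (L : ℤ) = (D.natAbs : ℤ) * e' := by exact_mod_cast he'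
      rw [hLe]
      linear_combination (Qt * e') * hsd
    have hDneR : ((D : ℤ) : ℝ) ≠ 0 := by exact_mod_cast hdetB₀
    have hLneR : (L : ℝ) ≠ 0 := ne_of_gt hLposR
    rw [eq_div_iff hLneR]
    apply mul_left_cancel₀ hDneR
    calc ((D:ℤ):ℝ) * (τ * (L:ℝ)) = (((D:ℤ):ℝ) * τ) * (L:ℝ) := by ring
      _ = ((Qt:ℤ):ℝ) * (L:ℝ) := by rw [hkey]
      _ = (((Qt * (L:ℤ)):ℤ):ℝ) := by push_cast; ring
      _ = (((Qt * D.sign * e') * D :ℤ):ℝ) := by rw [hintid]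
      _ = ((D:ℤ):ℝ) * (((Qt * D.sign * e' :ℤ)):ℝ) := by push_cast; ring
  refine ⟨hpart1, ?_⟩
  intro k' δ hδ0 hδL hτle
  obtain ⟨m, hm⟩ := hpart1
  rw [hm] at hτle ⊢
  rw [div_le_iff₀ hLposR] at hτle ⊢
  have hmlt : (m : ℝ) < ((k' : ℝ) + 1 / (L:ℝ)) * (L:ℝ) := by
    calc (m:ℝ) ≤ ((k':ℝ) + δ) * (L:ℝ) := hτle
      _ < ((k':ℝ) + 1/(L:ℝ)) * (L:ℝ) := by
          apply mul_lt_mul_of_pos_right _ hLposR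
          linarith
  have hmlt2 : (m : ℝ) < (k':ℝ) * (L:ℝ) + 1 := by
    have : ((k':ℝ) + 1/(L:ℝ)) * (L:ℝ) = (k':ℝ) * (L:ℝ) + 1 := by
      field_simp
    linarith [hmlt]
  have hint : m < k' * (L:ℤ) + 1 := by exact_mod_cast hmlt2
  have hle : m ≤ k' * (L:ℤ) := by omega
  exact_mod_cast hle
end

section
/- Normality fails in the participatory-budgeting model with non-unit costs already for 3 voters: with voters {1,2,3}, three candidates approved by pairs {1,2}, {1,3}, {2,3} respectively, each of cost 2, and total budget 3, the utility vector (1,1,1) is achievable by a fractional allocation (half of each candidate, total cost 3) but by no integral selection of candidates within budget 3. -/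
/-- Approvers of the three candidates in the participatory budgeting example:
candidate 0 is approved by voters {1,2}, candidate 1 by {1,3}, candidate 2 by
{2,3} (0-indexed). -/
def pbApp : Fin 3 → Finset (Fin 3) := ![{0, 1}, {0, 2}, {1, 2}]

/-- Normality fails in the participatory-budgeting model with non-unit costs for
3 voters: with three candidates approved by pairs `{1,2}, {1,3}, {2,3}`, each
of cost 2 and total budget 3, the utility vector `(1,1,1)` is achievable
fractionally but by no integral selection within the budget. -/
theorem stmt18 :
    (∃ x : Fin 3 → ℝ, (∀ j, 0 ≤ x j ∧ x j ≤ 1) ∧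
      (∑ j, 2 * x j) ≤ 3 ∧
      (∀ i : Fin 3, (1 : ℝ) ≤ ∑ j, if i ∈ pbApp j then x j else 0)) ∧
    ¬ ∃ S : Finset (Fin 3), (∑ _j ∈ S, 2) ≤ 3 ∧
        ∀ i : Fin 3, 1 ≤ (S.filter (fun j => i ∈ pbApp j)).card := by
  constructor
  · refine ⟨fun _ => 1/2, fun j => by norm_num, ?_, ?_⟩
    · norm_num [Fin.sum_univ_three]
    · intro i
      fin_cases i <;> simp [Fin.sum_univ_three, pbApp] <;> norm_num
  · decide
end
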